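/- arXiv:1403.7662 — 4 statements merged into one kernel-verified Lean document; each statement's English description precedes it below -/
import Mathlib

section
/- Let $F$ be a non-archimedean local field of characteristic $0$ with ring of integers $\mathfrak{o}$, maximal ideal $\mathfrak{p}$, and let $e = \mathrm{ord}(2)$. For $0 \le r < e$, the subgroup $\mathfrak{o}^{\times 2}(1+\mathfrak{p}^{2r})$ of $\mathfrak{o}^\times$ equals $\mathfrak{o}^{\times 2}(1+\mathfrak{p}^{2r+1})$ (with the convention that $1+\mathfrak{p}^0$ means $\mathfrak{o}^\times$). -/
/- STATEMENT 0: For a non-archimedean local field `F` of characteristic 0 (a finite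
extension of `ℚ_p`) with normalized valuation `ord` and `e = ord 2`, for `0 ≤ r < e`
one has `𝔬^{×2}(1+𝔭^{2r}) = 𝔬^{×2}(1+𝔭^{2r+1})` inside `𝔬^×`
(with the convention `1+𝔭^0 = 𝔬^×`). -/

/-- The group of units of the valuation ring: elements of valuation zero. -/
def unitSet {F : Type*} [Field F] (ord : F → ℤ) : Set F :=
  {x | x ≠ 0 ∧ ord x = 0}

/-- `1 + 𝔭^c`, with the convention that for `c = 0` this means `𝔬^×`. -/
def onePlusP {F : Type*} [Field F] (ord : F → ℤ) : ℕ → Set F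
  | 0 => unitSet ord
  | (c+1) => {x | x - 1 = 0 ∨ ((c : ℤ) + 1 ≤ ord (x - 1))}

/-- `𝔬^{×2} · (1 + 𝔭^c)`. -/
def sqUnitsTimes {F : Type*} [Field F] (ord : F → ℤ) (c : ℕ) : Set F :=
  {x | ∃ v ∈ unitSet ord, ∃ w ∈ onePlusP ord c, x = v ^ 2 * w}

section AuxOrd
variable {F : Type*} [Field F] {ord : F → ℤ}

lemma aux_ord_one (hmul : ∀ x y : F, x ≠ 0 → y ≠ 0 → ord (x * y) = ord x + ord y) :
    ord (1 : F) = 0 := by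
  have h := hmul 1 1 one_ne_zero one_ne_zero
  rw [mul_one] at h; omega

lemma aux_ord_neg (hmul : ∀ x y : F, x ≠ 0 → y ≠ 0 → ord (x * y) = ord x + ord y)
    {x : F} (hx : x ≠ 0) : ord (-x) = ord x := by
  have h1 := hmul (-1 : F) (-1) (by norm_num) (by norm_num)
  rw [neg_mul_neg, one_mul, aux_ord_one hmul] at h1
  have h2 := hmul (-1 : F) x (by norm_num) hx
  rw [neg_one_mul] at h2
  omega

lemma aux_ord_inv (hmul : ∀ x y : F, x ≠ 0 → y ≠ 0 → ord (x * y) = ord x + ord y)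
    {x : F} (hx : x ≠ 0) : ord x⁻¹ = - ord x := by
  have h := hmul x x⁻¹ hx (inv_ne_zero hx)
  rw [mul_inv_cancel₀ hx, aux_ord_one hmul] at h; omega

lemma aux_ord_pow (hmul : ∀ x y : F, x ≠ 0 → y ≠ 0 → ord (x * y) = ord x + ord y)
    {x : F} (hx : x ≠ 0) (n : ℕ) : ord (x ^ n) = (n : ℤ) * ord x := by
  induction n with
  | zero => simpa using aux_ord_one hmul
  | succ n ih =>
      have h := hmul (x ^ n) x (pow_ne_zero _ hx) hx
      rw [← pow_succ] at h
      rw [h, ih]; push_cast; ring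

lemma aux_ord_dom (hmul : ∀ x y : F, x ≠ 0 → y ≠ 0 → ord (x * y) = ord x + ord y)
    (hult : ∀ x y : F, x ≠ 0 → y ≠ 0 → x + y ≠ 0 → min (ord x) (ord y) ≤ ord (x + y))
    {x y : F} (hx : x ≠ 0) (hy : y ≠ 0)
    (hlt : ord x < ord y) : x + y ≠ 0 ∧ ord (x + y) = ord x := by
  have hne : x + y ≠ 0 := by
    intro h
    have hxy : x = -y := eq_neg_of_add_eq_zero_left h
    rw [hxy, aux_ord_neg hmul hy] at hlt; omega
  have h1 := hult x y hx hy hne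
  rw [min_eq_left hlt.le] at h1
  have h2 := hult (x + y) (-y) hne (neg_ne_zero.mpr hy)
    (by rw [add_neg_cancel_right]; exact hx)
  rw [add_neg_cancel_right, aux_ord_neg hmul hy] at h2
  refine ⟨hne, ?_⟩
  rcases min_le_iff.mp h2 with h | h <;> omega

end AuxOrd

lemma aux_zmod2 : ∀ x : ZMod 2, x = 0 ∨ x = 1 := by decide

lemma aux_mem_max_norm_lt {x : ℤ_[2]} (hx : x ∈ IsLocalRing.maximalIdeal ℤ_[2]) : ‖x‖ < 1 := by
  rw [PadicInt.maximalIdeal_eq_span_p, Ideal.mem_span_singleton,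
    ← PadicInt.norm_lt_one_iff_dvd] at hx
  exact hx

lemma aux_unit_sub_one {u : ℤ_[2]} (hu : ‖u‖ = 1) : ‖u - 1‖ < 1 := by
  rcases aux_zmod2 (PadicInt.toZMod u) with h | h
  · exfalso
    have hm : u ∈ RingHom.ker (PadicInt.toZMod (p := 2)) := by
      rw [RingHom.mem_ker]; exact h
    rw [PadicInt.ker_toZMod] at hm
    have := aux_mem_max_norm_lt hm
    rw [hu] at this; exact lt_irrefl _ this
  · have hm : u - 1 ∈ RingHom.ker (PadicInt.toZMod (p := 2)) := by
      rw [RingHom.mem_ker, map_sub, map_one, h, sub_self]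
    rw [PadicInt.ker_toZMod] at hm
    exact aux_mem_max_norm_lt hm

lemma aux_norm_three : ‖(3 : ℤ_[2])‖ = 1 := by
  have h2 : ¬ ‖((3 : ℤ) : ℤ_[2])‖ < 1 := by
    rw [PadicInt.norm_int_lt_one_iff_dvd]; decide
  have h4 : ((3 : ℤ) : ℤ_[2]) = (3 : ℤ_[2]) := by push_cast; ring
  rw [h4] at h2
  have h5 := PadicInt.norm_le_one (3 : ℤ_[2])
  rcases lt_or_eq_of_le h5 with h | h
  · exact absurd h h2
  · exact h

lemma aux_cube_root {u : ℤ_[2]} (hu : ‖u‖ = 1) : ∃ z : ℤ_[2], ‖z‖ = 1 ∧ z ^ 3 = u := by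
  have heval : (Polynomial.X ^ 3 - Polynomial.C u : Polynomial ℤ_[2]).eval 1 = 1 - u := by
    simp
  have hderiv : (Polynomial.X ^ 3 - Polynomial.C u : Polynomial ℤ_[2]).derivative.eval 1
      = 3 := by
    simp; norm_num
  have hnorm : ‖(Polynomial.X ^ 3 - Polynomial.C u : Polynomial ℤ_[2]).eval 1‖ <
      ‖(Polynomial.X ^ 3 - Polynomial.C u : Polynomial ℤ_[2]).derivative.eval 1‖ ^ 2 := by
    rw [heval, hderiv, aux_norm_three, one_pow, norm_sub_rev]
    exact aux_unit_sub_one hu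
  obtain ⟨z, hz, -⟩ := hensels_lemma hnorm
  have hz3 : z ^ 3 = u := by
    have := hz
    simp only [map_sub, map_pow, Polynomial.aeval_X,
      Polynomial.aeval_C, Algebra.algebraMap_self, RingHom.id_apply, sub_eq_zero] at this
    exact this
  refine ⟨z, ?_, hz3⟩
  have hnn : ‖z‖ * (‖z‖ * ‖z‖) = 1 := by
    have h1 : z * (z * z) = u := by rw [← hz3]; ring
    calc ‖z‖ * (‖z‖ * ‖z‖) = ‖z * (z * z)‖ := by rw [norm_mul, norm_mul]
    _ = 1 := by rw [h1, hu]
  have h0 : (0:ℝ) ≤ ‖z‖ := norm_nonneg z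
  have h1 : ‖z‖ ≤ 1 := PadicInt.norm_le_one z
  nlinarith [sq_nonneg (‖z‖ - 1), sq_nonneg (‖z‖ + 1)]

lemma aux_pow3_root {u : ℤ_[2]} (hu : ‖u‖ = 1) (k : ℕ) :
    ∃ w : ℤ_[2], ‖w‖ = 1 ∧ w ^ (3 ^ k) = u := by
  induction k with
  | zero => exact ⟨u, hu, by simp⟩
  | succ k ih =>
      obtain ⟨w, hw1, hw2⟩ := ih
      obtain ⟨z, hz1, hz2⟩ := aux_cube_root hw1
      refine ⟨z, hz1, ?_⟩
      rw [pow_succ, mul_comm, pow_mul, hz2, hw2]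

section PadicToF
variable {F : Type*} [Field F] [Algebra ℚ_[2] F] {ord : F → ℤ}

lemma aux_unit_ord_zero
    (hmul : ∀ x y : F, x ≠ 0 → y ≠ 0 → ord (x * y) = ord x + ord y)
    {u : ℚ_[2]} (hu : ‖u‖ = 1) : ord (algebraMap ℚ_[2] F u) = 0 := by
  set A := ord (algebraMap ℚ_[2] F u) with hA
  set u' : ℤ_[2] := ⟨u, hu.le⟩ with hu'def
  have hu' : ‖u'‖ = 1 := hu
  have h3 : ∀ k : ℕ, ((3 : ℤ) ^ k) ∣ A := by
    intro k
    obtain ⟨w, hw1, hw2⟩ := aux_pow3_root hu' k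
    have hwne : (w : ℚ_[2]) ≠ 0 := by
      intro h
      rw [show w = 0 from Subtype.ext h, norm_zero] at hw1
      norm_num at hw1
    have hmap : algebraMap ℚ_[2] F u = (algebraMap ℚ_[2] F (w : ℚ_[2])) ^ (3 ^ k) := by
      rw [← map_pow]
      congr 1
      have h5 : (u : ℚ_[2]) = (w : ℚ_[2]) ^ (3:ℕ) ^ k := by
        exact_mod_cast congrArg (fun t : ℤ_[2] => (t : ℚ_[2])) hw2.symm
      exact h5
    have hmapne : algebraMap ℚ_[2] F (w : ℚ_[2]) ≠ 0 := by
      simpa using hwne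
    rw [hA, hmap, aux_ord_pow hmul hmapne]
    exact ⟨ord (algebraMap ℚ_[2] F (w : ℚ_[2])), by push_cast; ring⟩
  by_contra h
  have hM : 0 < A.natAbs := Int.natAbs_pos.mpr h
  have hdvd : ((3 : ℤ) ^ A.natAbs) ∣ |A| := (dvd_abs _ _).mpr (h3 A.natAbs)
  have hle : (3 : ℤ) ^ A.natAbs ≤ |A| := Int.le_of_dvd (abs_pos.mpr h) hdvd
  have habs : |A| = (A.natAbs : ℤ) := Int.abs_eq_natAbs A
  have hlt : (A.natAbs : ℤ) < 3 ^ A.natAbs := by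
    have := Nat.lt_pow_self (by norm_num : 1 < 3) (n := A.natAbs)
    exact_mod_cast this
  omega

lemma aux_int_ord_nonneg
    (hmul : ∀ x y : F, x ≠ 0 → y ≠ 0 → ord (x * y) = ord x + ord y)
    (h2 : (1:ℤ) ≤ ord (2 : F))
    {z : ℚ_[2]} (hz : z ≠ 0) (hz1 : ‖z‖ ≤ 1) : 0 ≤ ord (algebraMap ℚ_[2] F z) := by
  haveI : CharZero F := charZero_of_injective_algebraMap (algebraMap ℚ_[2] F).injective
  set z' : ℤ_[2] := ⟨z, hz1⟩ with hz'def
  have hz'0 : z' ≠ 0 := by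
    intro h; exact hz (by simpa [hz'def] using congrArg (Subtype.val) h)
  have hspec := PadicInt.unitCoeff_spec hz'0
  have hcoe : z = ((PadicInt.unitCoeff hz'0 : ℤ_[2]) : ℚ_[2]) *
      (2 : ℚ_[2]) ^ (z'.valuation) := by
    have h6 := congrArg (fun t : ℤ_[2] => (t : ℚ_[2])) hspec
    push_cast at h6
    convert h6 using 3
    exact Nat.cast_ofNat.symm
  have hunorm : ‖((PadicInt.unitCoeff hz'0 : ℤ_[2]) : ℚ_[2])‖ = 1 := by
    rw [← PadicInt.norm_def]
    exact PadicInt.norm_units _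
  have huF : algebraMap ℚ_[2] F ((PadicInt.unitCoeff hz'0 : ℤ_[2]) : ℚ_[2]) ≠ 0 := by
    simp only [ne_eq, map_eq_zero]
    intro h; rw [h, norm_zero] at hunorm; norm_num at hunorm
  have h2F : algebraMap ℚ_[2] F (2 : ℚ_[2]) = (2 : F) := by
    rw [map_ofNat]
  have h2ne : (2 : F) ≠ 0 := two_ne_zero
  have h2pne : algebraMap ℚ_[2] F ((2:ℚ_[2]) ^ (z'.valuation)) ≠ 0 := by
    rw [map_pow, h2F]; exact pow_ne_zero _ h2ne
  rw [hcoe, map_mul, hmul _ _ huF h2pne, aux_unit_ord_zero hmul hunorm, map_pow, h2F,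
    aux_ord_pow hmul h2ne]
  have : (0:ℤ) ≤ (z'.valuation : ℤ) * ord (2:F) :=
    mul_nonneg (by positivity) (by omega)
  omega

lemma aux_residue01
    (hmul : ∀ x y : F, x ≠ 0 → y ≠ 0 → ord (x * y) = ord x + ord y)
    (h2 : (1:ℤ) ≤ ord (2 : F))
    {z : ℚ_[2]} (hz1 : ‖z‖ ≤ 1) :
    ∃ ε : F, (ε = 0 ∨ ε = 1) ∧
      (algebraMap ℚ_[2] F z - ε = 0 ∨ 1 ≤ ord (algebraMap ℚ_[2] F z - ε)) := by
  haveI : CharZero F := charZero_of_injective_algebraMap (algebraMap ℚ_[2] F).injective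
  set z' : ℤ_[2] := ⟨z, hz1⟩ with hz'def
  have h2F : algebraMap ℚ_[2] F (2 : ℚ_[2]) = (2 : F) := by rw [map_ofNat]
  have h2ne : (2 : F) ≠ 0 := two_ne_zero
  have key : ∀ y : ℤ_[2], (2 : ℤ_[2]) ∣ y →
      (algebraMap ℚ_[2] F (y : ℚ_[2]) = 0 ∨ 1 ≤ ord (algebraMap ℚ_[2] F (y : ℚ_[2]))) := by
    intro y hy
    obtain ⟨t, rfl⟩ := hy
    by_cases ht : (t : ℚ_[2]) = 0
    · left
      have hco : ((2 * t : ℤ_[2]) : ℚ_[2]) = 2 * (t : ℚ_[2]) := by norm_cast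
      rw [hco, ht, mul_zero, map_zero]
    · right
      have hco : ((2 * t : ℤ_[2]) : ℚ_[2]) = 2 * (t : ℚ_[2]) := by norm_cast
      have htF : algebraMap ℚ_[2] F (t : ℚ_[2]) ≠ 0 := by simpa using ht
      have htle : ‖(t : ℚ_[2])‖ ≤ 1 := PadicInt.norm_le_one t
      have h0 := aux_int_ord_nonneg hmul h2 ht htle
      rw [hco, map_mul, h2F, hmul _ _ h2ne htF]
      omega
  rcases aux_zmod2 (PadicInt.toZMod z') with h | h
  · refine ⟨0, Or.inl rfl, ?_⟩
    have hm : z' ∈ RingHom.ker (PadicInt.toZMod (p := 2)) := by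
      rw [RingHom.mem_ker]; exact h
    have hm2 : (2 : ℤ_[2]) ∣ z' := by
      rw [PadicInt.ker_toZMod, PadicInt.maximalIdeal_eq_span_p,
        Ideal.mem_span_singleton] at hm
      exact hm
    have hz'c : (z' : ℚ_[2]) = z := rfl
    rcases key z' hm2 with hk | hk
    · left; rw [sub_zero, ← hz'c]; exact hk
    · right; rw [sub_zero, ← hz'c]; exact hk
  · refine ⟨1, Or.inr rfl, ?_⟩
    have hm : z' - 1 ∈ RingHom.ker (PadicInt.toZMod (p := 2)) := by
      rw [RingHom.mem_ker, map_sub, map_one, h, sub_self]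
    have hm2 : (2 : ℤ_[2]) ∣ z' - 1 := by
      rw [PadicInt.ker_toZMod, PadicInt.maximalIdeal_eq_span_p,
        Ideal.mem_span_singleton] at hm
      exact hm
    have hco : ((z' - 1 : ℤ_[2]) : ℚ_[2]) = z - 1 := by push_cast; rfl
    have hmap : algebraMap ℚ_[2] F ((z' - 1 : ℤ_[2]) : ℚ_[2])
        = algebraMap ℚ_[2] F z - 1 := by
      rw [hco, map_sub, map_one]
    rcases key _ hm2 with hk | hk
    · left; rw [← hmap]; exact hk
    · right; rw [← hmap]; exact hk

end PadicToF

section ValRing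
variable {F : Type*} [Field F]

def valO (ord : F → ℤ)
    (hmul : ∀ x y : F, x ≠ 0 → y ≠ 0 → ord (x * y) = ord x + ord y)
    (hult : ∀ x y : F, x ≠ 0 → y ≠ 0 → x + y ≠ 0 → min (ord x) (ord y) ≤ ord (x + y)) :
    Subring F where
  carrier := {x | x = 0 ∨ 0 ≤ ord x}
  one_mem' := Or.inr (by rw [aux_ord_one hmul])
  zero_mem' := Or.inl rfl
  mul_mem' := by
    intro x y hx hy
    by_cases hx0 : x = 0
    · left; rw [hx0, zero_mul]
    by_cases hy0 : y = 0
    · left; rw [hy0, mul_zero]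
    right
    rw [hmul x y hx0 hy0]
    exact add_nonneg (hx.resolve_left hx0) (hy.resolve_left hy0)
  add_mem' := by
    intro x y hx hy
    by_cases hx0 : x = 0
    · rw [hx0, zero_add]; exact hy
    by_cases hy0 : y = 0
    · rw [hy0, add_zero]; exact hx
    by_cases hxy : x + y = 0
    · left; exact hxy
    right
    exact le_trans (le_min (hx.resolve_left hx0) (hy.resolve_left hy0)) (hult x y hx0 hy0 hxy)
  neg_mem' := by
    intro x hx
    by_cases hx0 : x = 0
    · left; rw [hx0, neg_zero]
    right
    rw [aux_ord_neg hmul hx0]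
    exact hx.resolve_left hx0

lemma mem_valO {ord : F → ℤ} {hmul} {hult} (x : F) :
    x ∈ valO ord hmul hult ↔ (x = 0 ∨ 0 ≤ ord x) := Iff.rfl

def valm (ord : F → ℤ)
    (hmul : ∀ x y : F, x ≠ 0 → y ≠ 0 → ord (x * y) = ord x + ord y)
    (hult : ∀ x y : F, x ≠ 0 → y ≠ 0 → x + y ≠ 0 → min (ord x) (ord y) ≤ ord (x + y)) :
    Ideal (valO ord hmul hult) where
  carrier := {x | (x : F) = 0 ∨ 1 ≤ ord (x : F)}
  zero_mem' := Or.inl rfl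
  add_mem' := by
    rintro ⟨x, hxO⟩ ⟨y, hyO⟩ hx hy
    simp only [Set.mem_setOf_eq] at hx hy ⊢
    by_cases hx0 : x = 0
    · subst hx0; simpa using hy
    by_cases hy0 : y = 0
    · subst hy0; simpa using hx
    by_cases hxy : x + y = 0
    · left; exact hxy
    right
    exact le_trans (le_min (hx.resolve_left hx0) (hy.resolve_left hy0)) (hult x y hx0 hy0 hxy)
  smul_mem' := by
    rintro ⟨c, hcO⟩ ⟨x, hxO⟩ hx
    simp only [Set.mem_setOf_eq] at hx ⊢
    show (c * x = 0) ∨ 1 ≤ ord (c * x)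
    by_cases hc0 : c = 0
    · left; rw [hc0, zero_mul]
    by_cases hx0 : x = 0
    · left; rw [hx0, mul_zero]
    right
    rw [hmul c x hc0 hx0]
    have h1 : 0 ≤ ord c := hcO.resolve_left hc0
    have h2 : 1 ≤ ord x := hx.resolve_left hx0
    omega

lemma mem_valm {ord : F → ℤ} {hmul} {hult} (x : valO ord hmul hult) :
    x ∈ valm ord hmul hult ↔ ((x : F) = 0 ∨ 1 ≤ ord (x : F)) := Iff.rfl

end ValRing

set_option maxHeartbeats 2000000 in
set_option synthInstance.maxHeartbeats 400000 in
lemma aux_sqrt_mod {F : Type*} [Field F] [Algebra ℚ_[2] F] [FiniteDimensional ℚ_[2] F]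
    (ord : F → ℤ)
    (hmul : ∀ x y : F, x ≠ 0 → y ≠ 0 → ord (x * y) = ord x + ord y)
    (hult : ∀ x y : F, x ≠ 0 → y ≠ 0 → x + y ≠ 0 → min (ord x) (ord y) ≤ ord (x + y))
    (h2 : (1:ℤ) ≤ ord (2 : F))
    {a : F} (ha0 : a ≠ 0) (ha : ord a = 0) :
    ∃ b : F, b ≠ 0 ∧ ord b = 0 ∧ (a = b ^ 2 ∨ 1 ≤ ord (a - b ^ 2)) := by
  classical
  haveI : CharZero F := charZero_of_injective_algebraMap (algebraMap ℚ_[2] F).injective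
  set O : Subring F := valO ord hmul hult with hO
  set m : Ideal O := valm ord hmul hult with hm
  set π : O →+* O ⧸ m := Ideal.Quotient.mk m with hπ
  -- basic facts about the quotient
  have htwo : (2 : O ⧸ m) = 0 := by
    have : ((2 : O) : F) = (2 : F) := by push_cast; rfl
    have h2m : (2 : O) ∈ m := by
      rw [mem_valm, this]; right; exact h2
    have : π (2 : O) = 0 := Ideal.Quotient.eq_zero_iff_mem.mpr h2m
    rwa [map_ofNat] at this
  have hxx : ∀ x : O ⧸ m, x + x = 0 := by
    intro x; rw [← two_mul, htwo, zero_mul]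
  have hsqz : ∀ x : O ⧸ m, x ^ 2 = 0 → x = 0 := by
    intro x hx
    obtain ⟨t, rfl⟩ := Ideal.Quotient.mk_surjective (I := m) x
    rw [← map_pow] at hx
    have htm : t ^ 2 ∈ m := Ideal.Quotient.eq_zero_iff_mem.mp hx
    rw [mem_valm] at htm
    apply Ideal.Quotient.eq_zero_iff_mem.mpr
    rw [mem_valm]
    by_cases ht0 : (t : F) = 0
    · left; exact ht0
    have hcoe : ((t ^ 2 : O) : F) = (t : F) ^ 2 := by push_cast; rfl
    rw [hcoe] at htm
    rcases htm with h | h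
    · exact absurd h (pow_ne_zero _ ht0)
    · right
      rw [aux_ord_pow hmul ht0] at h
      omega
  have hsq : ∀ x y : O ⧸ m, x ^ 2 = y ^ 2 → x = y := by
    intro x y h
    have h0 : (x - y) ^ 2 = 0 := by
      have e1 : (x - y) ^ 2 = x ^ 2 - 2 * (x * y) + y ^ 2 := by ring
      rw [e1, htwo, zero_mul, sub_zero, h, ← two_mul, htwo, zero_mul]
    have := hsqz _ h0
    exact sub_eq_zero.mp this
  have hone : (1 : O ⧸ m) ≠ 0 := by
    intro h
    have h1m : (1 : O) ∈ m := Ideal.Quotient.eq_zero_iff_mem.mp (by rwa [map_one])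
    rw [mem_valm] at h1m
    have hcoe : ((1 : O) : F) = (1 : F) := rfl
    rw [hcoe, aux_ord_one hmul] at h1m
    rcases h1m with h | h
    · exact one_ne_zero h
    · omega
  have frob : ∀ (N : ℕ) (x y : O ⧸ m), x ^ (2 ^ N) = y ^ (2 ^ N) → x = y := by
    intro N
    induction N with
    | zero => intro x y h; simpa using h
    | succ N ih =>
        intro x y h
        rw [pow_succ, pow_mul, pow_mul] at h
        exact ih x y (hsq _ _ h)
  -- a as element of O
  have haO : a ∈ O := Or.inr ha.ge
  set aO : O := ⟨a, haO⟩ with haOdef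
  set abar : O ⧸ m := π aO with habar
  -- linear dependence of powers of a
  set n := Module.finrank ℚ_[2] F with hn
  have hnl : ¬ LinearIndependent ℚ_[2] (fun i : Fin (n + 1) => a ^ (i : ℕ)) := by
    intro h
    have := h.fintype_card_le_finrank
    rw [Fintype.card_fin] at this
    omega
  obtain ⟨c, hcsum, j, hcj⟩ := Fintype.not_linearIndependent_iff.mp hnl
  -- index of minimal valuation
  set T0 : Finset (Fin (n + 1)) := Finset.univ.filter (fun i => c i ≠ 0) with hT0
  have hjT0 : j ∈ T0 := Finset.mem_filter.mpr ⟨Finset.mem_univ _, hcj⟩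
  obtain ⟨j', hj'T, hj'min⟩ := T0.exists_min_image (fun i => (c i).valuation) ⟨j, hjT0⟩
  have hcj' : c j' ≠ 0 := (Finset.mem_filter.mp hj'T).2
  set d : Fin (n + 1) → ℚ_[2] := fun i => c i / c j' with hd
  have hdle : ∀ i, ‖d i‖ ≤ 1 := by
    intro i
    by_cases hci : c i = 0
    · simp [hd, hci]
    have hji := hj'min i (Finset.mem_filter.mpr ⟨Finset.mem_univ _, hci⟩)
    rw [hd]
    simp only
    rw [norm_div, Padic.norm_eq_zpow_neg_valuation hci, Padic.norm_eq_zpow_neg_valuation hcj']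
    rw [div_le_one (by positivity)]
    apply zpow_le_zpow_right₀ (by norm_num : (1:ℝ) ≤ 2)
    omega
  have hta : ∀ i : Fin (n + 1), algebraMap ℚ_[2] F (d i) * a ^ (i : ℕ) ∈ O := by
    intro i
    by_cases h0 : d i = 0
    · left; rw [h0, map_zero, zero_mul]
    right
    have hne : algebraMap ℚ_[2] F (d i) ≠ 0 := by simpa using h0
    rw [hmul _ _ hne (pow_ne_zero _ ha0), aux_ord_pow hmul ha0, ha, mul_zero, add_zero]
    exact aux_int_ord_nonneg hmul h2 h0 (hdle i)
  set t : (i : Fin (n + 1)) → O := fun i => ⟨algebraMap ℚ_[2] F (d i) * a ^ (i : ℕ), hta i⟩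
    with ht
  have htsum : (∑ i, t i) = 0 := by
    apply Subtype.ext
    have hcoe : ((∑ i, t i : O) : F) = ∑ i, (algebraMap ℚ_[2] F (d i) * a ^ (i : ℕ)) := by
      push_cast [ht]; rfl
    rw [hcoe]
    have hterm : ∀ i : Fin (n + 1),
        algebraMap ℚ_[2] F (d i) * a ^ (i : ℕ) = (c j')⁻¹ • (c i • a ^ (i : ℕ)) := by
      intro i
      rw [smul_smul, ← Algebra.smul_def, hd]
      congr 1
      simp only
      rw [div_eq_mul_inv, mul_comm]
    calc (∑ i, algebraMap ℚ_[2] F (d i) * a ^ (i : ℕ))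
        = ∑ i, (c j')⁻¹ • (c i • a ^ (i : ℕ)) := Finset.sum_congr rfl (fun i _ => hterm i)
      _ = (c j')⁻¹ • ∑ i, (c i • a ^ (i : ℕ)) := (Finset.smul_sum).symm
      _ = 0 := by rw [hcsum, smul_zero]
  have htsum0 : (∑ i, π (t i)) = 0 := by
    rw [← map_sum, htsum, map_zero]
  -- residue coefficients
  have hres : ∀ i : Fin (n + 1), ∃ b : O ⧸ m,
      (b = 0 ∨ b = 1) ∧ π (t i) = b * abar ^ (i : ℕ) := by
    intro i
    obtain ⟨ε, hε01, hεd⟩ := aux_residue01 hmul h2 (hdle i)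
    have hεO : ε ∈ O := by
      rcases hε01 with rfl | rfl
      · exact O.zero_mem
      · exact O.one_mem
    refine ⟨π ⟨ε, hεO⟩, ?_, ?_⟩
    · rcases hε01 with rfl | rfl
      · left
        have : (⟨(0:F), hεO⟩ : O) = 0 := rfl
        rw [this, map_zero]
      · right
        have : (⟨(1:F), hεO⟩ : O) = 1 := rfl
        rw [this, map_one]
    · rw [habar, ← map_pow, ← map_mul, Ideal.Quotient.mk_eq_mk_iff_sub_mem]
      rw [mem_valm]
      have hcoe : ((t i - ⟨ε, hεO⟩ * aO ^ (i : ℕ) : O) : F)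
          = (algebraMap ℚ_[2] F (d i) - ε) * a ^ (i : ℕ) := by
        push_cast [ht, haOdef]
        ring
      rw [hcoe]
      by_cases hz : algebraMap ℚ_[2] F (d i) - ε = 0
      · left; rw [hz, zero_mul]
      right
      have hεd' := hεd.resolve_left hz
      rw [hmul _ _ hz (pow_ne_zero _ ha0), aux_ord_pow hmul ha0, ha, mul_zero, add_zero]
      exact hεd'
  choose bcoef hb01 hbrep using hres
  have hbj' : bcoef j' = 1 := by
    rcases hb01 j' with h0 | h1
    · exfalso
      have hπ0 : π (t j') = 0 := by rw [hbrep j', h0, zero_mul]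
      have htm := Ideal.Quotient.eq_zero_iff_mem.mp hπ0
      rw [mem_valm] at htm
      have hdj' : d j' = 1 := div_self hcj'
      have hcoe : ((t j' : O) : F) = a ^ (j' : ℕ) := by
        show algebraMap ℚ_[2] F (d j') * a ^ (j' : ℕ) = a ^ (j' : ℕ)
        rw [hdj', map_one, one_mul]
      rw [hcoe] at htm
      rcases htm with h | h
      · exact pow_ne_zero _ ha0 h
      · rw [aux_ord_pow hmul ha0, ha, mul_zero] at h
        omega
    · exact h1
  have hrel : ∑ i : Fin (n + 1), bcoef i * abar ^ (i : ℕ) = 0 := by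
    rw [← htsum0]
    exact Finset.sum_congr rfl (fun i _ => (hbrep i).symm)
  -- maximal nonzero coefficient index
  set T : Finset (Fin (n + 1)) := Finset.univ.filter (fun i => bcoef i ≠ 0) with hT
  have hjT : j' ∈ T := Finset.mem_filter.mpr ⟨Finset.mem_univ _, by rw [hbj']; exact hone⟩
  set D' : Fin (n + 1) := T.max' ⟨j', hjT⟩ with hD'
  have hD'T : D' ∈ T := T.max'_mem _
  have hbD' : bcoef D' = 1 := (hb01 D').resolve_left (Finset.mem_filter.mp hD'T).2
  set E : Finset (Fin (n + 1)) := T.erase D' with hE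
  have hElt : ∀ i ∈ E, (i : ℕ) < (D' : ℕ) := by
    intro i hi
    have h1 : i ≤ D' := Finset.le_max' T i (Finset.mem_of_mem_erase hi)
    have h2' : i ≠ D' := Finset.ne_of_mem_erase hi
    have h3 : (i:ℕ) ≠ (D':ℕ) := fun hval => h2' (Fin.ext hval)
    have h4 : (i:ℕ) ≤ (D':ℕ) := h1
    omega
  have hED : abar ^ ((D' : ℕ)) = ∑ i ∈ E, abar ^ (i : ℕ) := by
    have h1 : ∑ i ∈ T, bcoef i * abar ^ (i : ℕ) = 0 := by
      rw [← hrel]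
      apply Finset.sum_filter_of_ne
      intro i _ hne hbz
      exact hne (by rw [hbz, zero_mul])
    rw [← Finset.add_sum_erase _ _ hD'T, hbD', one_mul] at h1
    have h2' : ∑ i ∈ T.erase D', bcoef i * abar ^ (i : ℕ) = ∑ i ∈ E, abar ^ (i : ℕ) := by
      apply Finset.sum_congr rfl
      intro i hi
      have : bcoef i = 1 :=
        (hb01 i).resolve_left (Finset.mem_filter.mp (Finset.mem_of_mem_erase hi)).2
      rw [this, one_mul]
    rw [h2'] at h1
    have h3 := eq_neg_of_add_eq_zero_left h1
    rw [h3, neg_eq_iff_add_eq_zero]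
    exact hxx _
  set D : ℕ := (D' : ℕ) with hDdef
  have hDn : D < n + 1 := D'.isLt
  have hDpos : 0 < D := by
    by_contra h
    have hD0 : D = 0 := by omega
    have hEemp : E = ∅ := by
      apply Finset.eq_empty_of_forall_notMem
      intro i hi
      have := hElt i hi
      omega
    rw [hD0, pow_zero, hEemp, Finset.sum_empty] at hED
    exact hone hED
  set Rep : (O ⧸ m) → Prop := fun x => ∃ ε : Fin (n + 1) → Bool,
      (∀ i, ε i = true → (i : ℕ) < D) ∧
      x = ∑ i : Fin (n + 1), (if ε i = true then abar ^ (i : ℕ) else 0) with hRep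
  have hRep0 : Rep 0 := ⟨fun _ => false, by simp, by simp⟩
  have hRepAdd : ∀ x y, Rep x → Rep y → Rep (x + y) := by
    rintro x y ⟨ε, hεlt, rfl⟩ ⟨ε', hε'lt, rfl⟩
    refine ⟨fun i => xor (ε i) (ε' i), ?_, ?_⟩
    · intro i hi
      cases h1 : ε i with
      | true => exact hεlt i h1
      | false =>
          apply hε'lt i
          have hix : xor (ε i) (ε' i) = true := hi
          rw [h1, Bool.false_xor] at hix
          exact hix
    · rw [← Finset.sum_add_distrib]
      apply Finset.sum_congr rfl
      intro i _
      cases h1 : ε i <;> cases h2' : ε' i <;> simp [h1, h2', hxx]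
  have hRepPow : ∀ mm : ℕ, mm < D → Rep (abar ^ mm) := by
    intro mm hmm
    have hmmn : mm < n + 1 := hmm.trans hDn
    refine ⟨fun i => decide (i = ⟨mm, hmmn⟩), ?_, ?_⟩
    · intro i hi
      rw [decide_eq_true_eq] at hi
      rw [hi]
      exact hmm
    · simp only [decide_eq_true_eq]
      rw [Finset.sum_ite_eq' Finset.univ (⟨mm, hmmn⟩ : Fin (n + 1))
        (fun i => abar ^ (i : ℕ))]
      simp
  have hRepD : Rep (abar ^ D) := by
    rw [hED]
    refine ⟨fun i => decide (i ∈ E), fun i hi => hElt i (by simpa using hi), ?_⟩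
    simp only [decide_eq_true_eq]
    rw [Finset.sum_ite_mem, Finset.univ_inter]
  have hAll : ∀ mm : ℕ, Rep (abar ^ mm) := by
    intro mm
    induction mm using Nat.strong_induction_on with
    | _ mm IH =>
      rcases lt_or_ge mm D with h | h
      · exact hRepPow mm h
      · obtain ⟨η, hηlt, hη⟩ := hRepD
        have hmmeq : mm = (mm - D) + D := (Nat.sub_add_cancel h).symm
        rw [hmmeq, pow_add, hη, Finset.mul_sum]
        apply Finset.sum_induction _ Rep hRepAdd hRep0
        intro i _
        cases h1 : η i with
        | false => simpa [h1] using hRep0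
        | true =>
            have h2' : (i : ℕ) < D := hηlt i h1
            have h4 : Rep (abar ^ ((mm - D) + (i : ℕ))) := IH _ (by omega)
            simpa [pow_add] using h4
  have hchoice : ∀ mm : ℕ, ∃ ε : Fin (n + 1) → Bool,
      abar ^ (2 ^ mm) = ∑ i : Fin (n + 1), (if ε i = true then abar ^ (i : ℕ) else 0) :=
    fun mm => (hAll (2 ^ mm)).imp (fun ε hε => hε.2)
  choose g hg using hchoice
  obtain ⟨m₁, m₂, hmne, hgeq⟩ := Finite.exists_ne_map_eq_of_infinite g
  have hpoweq : abar ^ (2 ^ m₁) = abar ^ (2 ^ m₂) := by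
    rw [hg m₁, hg m₂, hgeq]
  have key : ∀ s₁ s₂ : ℕ, s₁ < s₂ → abar ^ (2 ^ s₁) = abar ^ (2 ^ s₂) →
      ∃ s : ℕ, 1 ≤ s ∧ abar ^ (2 ^ s) = abar := by
    intro s₁ s₂ hlt hpe
    refine ⟨s₂ - s₁, by omega, ?_⟩
    apply frob s₁
    rw [← pow_mul, ← pow_add, Nat.sub_add_cancel hlt.le]
    exact hpe.symm
  have hsfix : ∃ s : ℕ, 1 ≤ s ∧ abar ^ (2 ^ s) = abar := by
    rcases hmne.lt_or_gt with h | h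
    · exact key m₁ m₂ h hpoweq
    · exact key m₂ m₁ h hpoweq.symm
  obtain ⟨s, hs1, hfix⟩ := hsfix
  -- lift back to F
  have hmemm : aO ^ (2 ^ s) - aO ∈ m := by
    have hmk : π (aO ^ (2 ^ s)) = π aO := by
      rw [map_pow]
      exact hfix
    exact Ideal.Quotient.mk_eq_mk_iff_sub_mem _ _ |>.mp hmk
  rw [mem_valm] at hmemm
  have hcoe : ((aO ^ (2 ^ s) - aO : O) : F) = a ^ (2 ^ s) - a := by
    push_cast [haOdef]
    rfl
  rw [hcoe] at hmemm
  refine ⟨a ^ (2 ^ (s - 1)), pow_ne_zero _ ha0, ?_, ?_⟩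
  · rw [aux_ord_pow hmul ha0, ha, mul_zero]
  · have hb2 : (a ^ (2 ^ (s - 1))) ^ 2 = a ^ (2 ^ s) := by
      have h5 : 2 ^ (s - 1) * 2 = 2 ^ s := by
        rw [← pow_succ, Nat.sub_add_cancel hs1]
      rw [← pow_mul, h5]
    by_cases hz : a ^ (2 ^ s) - a = 0
    · left
      rw [hb2]
      exact (sub_eq_zero.mp hz).symm
    · right
      have hord := hmemm.resolve_left hz
      have hneg : a - (a ^ (2 ^ (s-1))) ^ 2 = -(a ^ (2 ^ s) - a) := by
        rw [hb2]; ring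
      rw [hneg, aux_ord_neg hmul hz]
      exact hord

lemma mem_onePlusP_succ {F : Type*} [Field F] (ord : F → ℤ) (c : ℕ) (x : F) :
    x ∈ onePlusP ord (c + 1) ↔ (x - 1 = 0 ∨ ((c : ℤ) + 1 ≤ ord (x - 1))) := Iff.rfl

lemma aux_ord_nat_nonneg {F : Type*} [Field F] [CharZero F] {ord : F → ℤ}
    (hmul : ∀ x y : F, x ≠ 0 → y ≠ 0 → ord (x * y) = ord x + ord y)
    (hult : ∀ x y : F, x ≠ 0 → y ≠ 0 → x + y ≠ 0 → min (ord x) (ord y) ≤ ord (x + y)) :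
    ∀ nn : ℕ, nn ≠ 0 → 0 ≤ ord (nn : F) := by
  intro nn hnn
  induction nn with
  | zero => exact absurd rfl hnn
  | succ k IH =>
    rcases Nat.eq_zero_or_pos k with rfl | hk
    · have : ((0 + 1 : ℕ) : F) = 1 := by push_cast; ring
      rw [this, aux_ord_one hmul]
    · have hKne : ((k : F)) ≠ 0 := Nat.cast_ne_zero.mpr (by omega)
      have hsne : ((k : F) + 1) ≠ 0 := by
        have h := Nat.cast_ne_zero (R := F) (n := k + 1) |>.mpr (by omega)
        push_cast at h; exact h
      have h1 := hult (k : F) 1 hKne one_ne_zero hsne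
      rw [aux_ord_one hmul] at h1
      have h2 := IH (by omega)
      have h3 : ((k + 1 : ℕ) : F) = (k : F) + 1 := by push_cast; ring
      rw [h3]
      exact le_trans (le_min h2 le_rfl) h1

set_option maxHeartbeats 1000000 in
theorem statement_0
    (p : ℕ) [Fact p.Prime]
    (F : Type*) [Field F] [Algebra ℚ_[p] F] [FiniteDimensional ℚ_[p] F]
    (ord : F → ℤ)
    (hmul : ∀ x y : F, x ≠ 0 → y ≠ 0 → ord (x * y) = ord x + ord y)
    (hult : ∀ x y : F, x ≠ 0 → y ≠ 0 → x + y ≠ 0 → min (ord x) (ord y) ≤ ord (x + y))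
    (hsurj : Function.Surjective ord)
    (hcomp : 0 < ord (algebraMap ℚ_[p] F p))
    (e : ℕ) (he : (e : ℤ) = ord 2)
    (r : ℕ) (hr : r < e) :
    sqUnitsTimes ord (2 * r) = sqUnitsTimes ord (2 * r + 1) := by
  classical
  haveI : CharZero F := charZero_of_injective_algebraMap (algebraMap ℚ_[p] F).injective
  have he1 : (1:ℤ) ≤ ord (2:F) := by
    rw [← he]
    have : (1:ℕ) ≤ e := by omega
    exact_mod_cast this
  have h2ne : (2:F) ≠ 0 := two_ne_zero
  -- p = 2
  have hp2 : p = 2 := by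
    by_contra hp
    have hodd : Odd p := (Fact.out : p.Prime).odd_of_ne_two hp
    obtain ⟨t, ht⟩ := hodd
    have ht0 : t ≠ 0 := by
      rintro rfl
      simp at ht
      exact Nat.Prime.one_lt (Fact.out : p.Prime) |>.ne' ht
    have hordp : 0 < ord ((p:ℕ) : F) := by
      have : algebraMap ℚ_[p] F ((p : ℕ) : ℚ_[p]) = ((p : ℕ) : F) := map_natCast _ _
      rwa [this] at hcomp
    have hpne : ((p:ℕ) : F) ≠ 0 := Nat.cast_ne_zero.mpr (Fact.out : p.Prime).pos.ne'
    have htne : ((t:ℕ) : F) ≠ 0 := Nat.cast_ne_zero.mpr ht0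
    have h2t : ord (2 * (t:F)) = ord (2:F) + ord ((t:F)) := hmul _ _ h2ne htne
    have h2tne : (2:F) * (t:F) ≠ 0 := mul_ne_zero h2ne htne
    have hpF : ((p:ℕ):F) = 2 * (t:F) + 1 := by
      rw [ht]; push_cast; ring
    have hsum1 : ((p:ℕ):F) + -(2 * (t:F)) = 1 := by rw [hpF]; ring
    have hm := hult ((p:ℕ):F) (-(2 * (t:F))) hpne (neg_ne_zero.mpr h2tne)
      (by rw [hsum1]; exact one_ne_zero)
    rw [hsum1, aux_ord_one hmul, aux_ord_neg hmul h2tne] at hm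
    have hordt : 0 ≤ ord ((t:ℕ) : F) := aux_ord_nat_nonneg hmul hult t ht0
    rcases min_le_iff.mp hm with h | h <;> omega
  subst hp2
  have h2F : (1:ℤ) ≤ ord (2:F) := he1
  ext x
  simp only [sqUnitsTimes, Set.mem_setOf_eq]
  constructor
  · rintro ⟨v, hv, w, hw, rfl⟩
    obtain ⟨hv0, hvord⟩ := hv
    rcases Nat.eq_zero_or_pos r with rfl | hrpos
    · -- r = 0
      have hw' : w ≠ 0 ∧ ord w = 0 := hw
      obtain ⟨b, hb0, hbord, hbsq⟩ := aux_sqrt_mod ord hmul hult h2F hw'.1 hw'.2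
      have hb2 : b ^ 2 ≠ 0 := pow_ne_zero _ hb0
      have hb2ord : ord (b ^ 2) = 0 := by rw [aux_ord_pow hmul hb0, hbord, mul_zero]
      refine ⟨v * b, ⟨mul_ne_zero hv0 hb0, by rw [hmul _ _ hv0 hb0, hvord, hbord]; ring⟩,
        w / b ^ 2, ?_, ?_⟩
      · rw [mem_onePlusP_succ]
        by_cases hwb : w = b ^ 2
        · left; rw [hwb, div_self hb2, sub_self]
        · right
          have hord := hbsq.resolve_left hwb
          have hnum : w - b ^ 2 ≠ 0 := sub_ne_zero.mpr hwb
          have hdiv : w / b ^ 2 - 1 = (w - b ^ 2) * (b ^ 2)⁻¹ := by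
            field_simp
          rw [hdiv, hmul _ _ hnum (inv_ne_zero hb2), aux_ord_inv hmul hb2, hb2ord]
          push_cast
          omega
      · field_simp
    · -- r ≥ 1
      have h2r : 2 * r = (2 * r - 1) + 1 := by omega
      rw [h2r, mem_onePlusP_succ] at hw
      by_cases hw1 : w = 1
      · refine ⟨v, ⟨hv0, hvord⟩, 1, ?_, by rw [hw1]⟩
        rw [mem_onePlusP_succ]
        left; ring
      · have hwsub : w - 1 ≠ 0 := sub_ne_zero.mpr hw1
        have hword : ((2 * r : ℕ) : ℤ) ≤ ord (w - 1) := by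
          rcases hw with h | h
          · exact absurd h hwsub
          · push_cast at h ⊢
            omega
        by_cases hhigh : ((2 * r : ℕ) : ℤ) + 1 ≤ ord (w - 1)
        · refine ⟨v, ⟨hv0, hvord⟩, w, ?_, rfl⟩
          rw [mem_onePlusP_succ]
          right
          push_cast at hhigh ⊢
          omega
        · have hword' : ord (w - 1) = 2 * (r:ℤ) := by push_cast at hword hhigh; omega
          -- a uniformizer
          obtain ⟨π₁, hπ0, hπ1⟩ : ∃ π₁ : F, π₁ ≠ 0 ∧ ord π₁ = 1 := by
            obtain ⟨y, hy⟩ := hsurj 1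
            by_cases hy0 : y = 0
            · obtain ⟨z2, hz2⟩ := hsurj 2
              obtain ⟨z3, hz3⟩ := hsurj 3
              have hz20 : z2 ≠ 0 := by
                rintro rfl; rw [hy0] at hy; rw [hy] at hz2; norm_num at hz2
              have hz30 : z3 ≠ 0 := by
                rintro rfl; rw [hy0] at hy; rw [hy] at hz3; norm_num at hz3
              refine ⟨z3 * z2⁻¹, mul_ne_zero hz30 (inv_ne_zero hz20), ?_⟩
              rw [hmul _ _ hz30 (inv_ne_zero hz20), aux_ord_inv hmul hz20, hz3, hz2]
              norm_num
            · exact ⟨y, hy0, hy⟩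
          have hπ2r0 : π₁ ^ (2*r) ≠ 0 := pow_ne_zero _ hπ0
          have hπ2rord : ord (π₁ ^ (2*r)) = 2 * (r:ℤ) := by
            rw [aux_ord_pow hmul hπ0, hπ1]; push_cast; ring
          set α := (w - 1) / π₁ ^ (2*r) with hα
          have hα0 : α ≠ 0 := div_ne_zero hwsub hπ2r0
          have hαord : ord α = 0 := by
            rw [hα, div_eq_mul_inv, hmul _ _ hwsub (inv_ne_zero hπ2r0),
              aux_ord_inv hmul hπ2r0, hword', hπ2rord]
            ring
          obtain ⟨b, hb0, hbord, hbsq⟩ := aux_sqrt_mod ord hmul hult h2F hα0 hαord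
          set cc := b * π₁ ^ r with hcc
          have hcc0 : cc ≠ 0 := mul_ne_zero hb0 (pow_ne_zero _ hπ0)
          have hccord : ord cc = (r:ℤ) := by
            rw [hcc, hmul _ _ hb0 (pow_ne_zero _ hπ0), hbord,
              aux_ord_pow hmul hπ0, hπ1]
            ring
          have hrpos' : (1:ℤ) ≤ (r:ℤ) := by exact_mod_cast hrpos
          have hvc := aux_ord_dom hmul hult one_ne_zero hcc0
            (by rw [aux_ord_one hmul, hccord]; omega)
          have hre : (r:ℤ) + 1 ≤ ord (2:F) := by
            rw [← he]
            have : r + 1 ≤ e := hr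
            exact_mod_cast this
          refine ⟨v * (1 + cc), ⟨mul_ne_zero hv0 hvc.1,
            by rw [hmul _ _ hv0 hvc.1, hvord, hvc.2, aux_ord_one hmul]; ring⟩,
            w / (1 + cc)^2, ?_, ?_⟩
          · rw [mem_onePlusP_succ]
            have hden : (1 + cc)^2 ≠ 0 := pow_ne_zero _ hvc.1
            have hdord : ord ((1 + cc)^2) = 0 := by
              rw [aux_ord_pow hmul hvc.1, hvc.2, aux_ord_one hmul]; ring
            have hw'1 : w / (1 + cc)^2 - 1 = (w - (1 + cc)^2) * ((1 + cc)^2)⁻¹ := by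
              field_simp
              exact div_sub_one hden
            by_cases hnumz : w - (1 + cc)^2 = 0
            · left; rw [hw'1, hnumz, zero_mul]
            right
            have hexp : w - (1 + cc)^2 = (w - 1 - cc^2) + (-(2*cc)) := by ring
            have h2cc0 : (2:F) * cc ≠ 0 := mul_ne_zero h2ne hcc0
            have hord2cc : ((2*r : ℕ):ℤ) + 1 ≤ ord (2*cc) := by
              rw [hmul _ _ h2ne hcc0, hccord]
              push_cast
              omega
            have hkey : w - 1 - cc^2 = π₁ ^ (2*r) * (α - b^2) := by
              rw [hα, hcc]
              have : (b * π₁ ^ r)^2 = b^2 * π₁ ^ (2*r) := by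
                rw [mul_pow, ← pow_mul]
                ring_nf
              rw [this, mul_sub, mul_div_cancel₀ _ hπ2r0]
              ring
            have hordkey : ∀ hz2 : w - 1 - cc^2 ≠ 0,
                ((2*r : ℕ):ℤ) + 1 ≤ ord (w - 1 - cc^2) := by
              intro hz2
              have hαb : α - b^2 ≠ 0 := by
                intro hzz
                rw [hkey, hzz, mul_zero] at hz2
                exact hz2 rfl
              have hord := hbsq.resolve_left (by intro hh; exact hαb (by rw [hh, sub_self]))
              rw [hkey, hmul _ _ hπ2r0 hαb, hπ2rord]
              push_cast
              omega
            have hnum_ord : ((2*r : ℕ):ℤ) + 1 ≤ ord (w - (1 + cc)^2) := by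
              by_cases hz2 : w - 1 - cc^2 = 0
              · rw [hexp, hz2, zero_add, aux_ord_neg hmul h2cc0]
                exact hord2cc
              · have hlow := hordkey hz2
                have hh := hult (w - 1 - cc^2) (-(2*cc)) hz2 (neg_ne_zero.mpr h2cc0)
                  (by rw [← hexp]; exact hnumz)
                rw [aux_ord_neg hmul h2cc0] at hh
                rw [hexp]
                exact le_trans (le_min hlow hord2cc) hh
            rw [hw'1, hmul _ _ hnumz (inv_ne_zero hden), aux_ord_inv hmul hden, hdord]
            push_cast at hnum_ord ⊢
            omega
          · have hden : (1 + cc)^2 ≠ 0 := pow_ne_zero _ hvc.1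
            have hq : (v*(1+cc))^2 * (w/(1+cc)^2) = v^2 * w * ((1+cc)^2 / (1+cc)^2) := by
              ring
            rw [hq, div_self hden, mul_one]
  · rintro ⟨v, hv, w, hw, rfl⟩
    refine ⟨v, hv, w, ?_, rfl⟩
    rw [mem_onePlusP_succ] at hw
    rcases Nat.eq_zero_or_pos r with rfl | hrpos
    · -- goal : w ∈ onePlusP ord (2*0) = unitSet
      show w ≠ 0 ∧ ord w = 0
      by_cases hz : w - 1 = 0
      · have : w = 1 := by rw [sub_eq_zero] at hz; exact hz
        rw [this]
        exact ⟨one_ne_zero, aux_ord_one hmul⟩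
      · have hlt : ord (1:F) < ord (w - 1) := by
          rw [aux_ord_one hmul]
          rcases hw with h | h
          · exact absurd h hz
          · push_cast at h; omega
        have hd := aux_ord_dom hmul hult one_ne_zero hz hlt
        have hsum : (1:F) + (w - 1) = w := by ring
        rw [hsum] at hd
        exact ⟨hd.1, by rw [hd.2, aux_ord_one hmul]⟩
    · have h2r : 2 * r = (2 * r - 1) + 1 := by omega
      rw [h2r, mem_onePlusP_succ]
      rcases hw with h | h
      · left; exact h
      · right
        push_cast at h ⊢
        omega
end

section
/- Let $F$ be a finite extension of $\mathbb{Q}_p$ with $p = 2$, ring of integers $\mathfrak{o}$, uniformizer $\varpi$, $e = \mathrm{ord}(2) > 0$, Haar measure with $\mathrm{Vol}(\mathfrak{o})=1$, and an additive character $\psi$ with conductor $\mathfrak{d}^{-1}$ where $\mathfrak{d} = (\boldsymbol\delta)$ is the different. If $x = \varpi^{2r-1} u$ with $u \in \mathfrak{o}^\times$ and $0 < r \le e$, then $\int_{\mathfrak{o}} \overline{\psi(t^2/(x\boldsymbol\delta))}\, dt = 0$. -/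
open MeasureTheory

/- STATEMENT 4: For a finite extension `F` of `ℚ_2` with `e = ord 2 > 0`, Haar
measure with `μ(𝔬) = 1` and additive character `ψ` of conductor `𝔡⁻¹`: if
`x = ϖ^{2r-1} u` with `u` a unit and `0 < r ≤ e`, then
`∫_𝔬 conj(ψ(t²/(xδ))) dt = 0`. -/

theorem statement_4
    (p : ℕ) [Fact p.Prime] (hp2 : p = 2)
    (F : Type*) [Field F] [Algebra ℚ_[p] F] [FiniteDimensional ℚ_[p] F]
    [MeasurableSpace F]
    (ord : F → ℤ)
    (hmul : ∀ x y : F, x ≠ 0 → y ≠ 0 → ord (x * y) = ord x + ord y)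
    (hult : ∀ x y : F, x ≠ 0 → y ≠ 0 → x + y ≠ 0 → min (ord x) (ord y) ≤ ord (x + y))
    (hsurj : Function.Surjective ord)
    (hcomp : 0 < ord (algebraMap ℚ_[p] F p))
    (q : ℝ) (hq : 1 < q)
    (μ : Measure F)
    (hμtrans : ∀ (a : F) (s : Set F), MeasurableSet s → μ ((a + ·) ⁻¹' s) = μ s)
    (hμball : ∀ n : ℤ, μ {x : F | x = 0 ∨ n ≤ ord x} = ENNReal.ofReal (q ^ (-n)))
    (hmeasball : ∀ n : ℤ, MeasurableSet {x : F | x = 0 ∨ n ≤ ord x})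
    (δ : F) (hδ : δ ≠ 0)
    (ψ : F → ℂ) (hψmeas : Measurable ψ)
    (hψadd : ∀ x y : F, ψ (x + y) = ψ x * ψ y)
    (hψnorm : ∀ x : F, ‖ψ x‖ = 1)
    (hψtriv : ∀ x : F, (x = 0 ∨ -(ord δ) ≤ ord x) → ψ x = 1)
    (hψnontriv : ∃ x : F, x ≠ 0 ∧ ord x = -(ord δ) - 1 ∧ ψ x ≠ 1)
    (ϖ : F) (hϖ0 : ϖ ≠ 0) (hϖ : ord ϖ = 1)
    (e : ℕ) (he : (e : ℤ) = ord 2) (hepos : 0 < e)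
    (u : F) (hu : u ≠ 0) (hu0 : ord u = 0)
    (r : ℕ) (hr1 : 0 < r) (hr2 : r ≤ e)
    (x : F) (hx : x = ϖ ^ (2 * r - 1) * u) :
    ∫ t in {y : F | y = 0 ∨ 0 ≤ ord y},
        (starRingEnd ℂ) (ψ (t ^ 2 / (x * δ))) ∂μ = 0 := by
  classical
  -- notation
  set D : ℤ := ord δ with hD
  set B : ℤ → Set F := fun n => {y : F | y = 0 ∨ n ≤ ord y} with hB
  set f : F → ℂ := fun t => (starRingEnd ℂ) (ψ (t ^ 2 / (x * δ))) with hf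
  set ν : Measure F := μ.restrict (B 0) with hν
  -- characteristic zero
  haveI : CharZero F := charZero_of_injective_algebraMap (algebraMap ℚ_[p] F).injective
  have h2F : (2 : F) ≠ 0 := two_ne_zero
  -- basic ord facts
  have hord1 : ord 1 = 0 := by
    have h := hmul 1 1 one_ne_zero one_ne_zero
    rw [mul_one] at h
    omega
  have hordneg : ∀ y : F, ord (-y) = ord y := by
    have hm1 : ord (-1 : F) = 0 := by
      have h := hmul (-1 : F) (-1) (by norm_num) (by norm_num)
      rw [neg_mul_neg, one_mul, hord1] at h
      omega
    intro y
    by_cases hy : y = 0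
    · rw [hy, neg_zero]
    · have h := hmul (-1 : F) y (by norm_num) hy
      rw [neg_one_mul] at h
      rw [h, hm1, zero_add]
  have hordinv : ∀ y : F, y ≠ 0 → ord y⁻¹ = -ord y := by
    intro y hy
    have h := hmul y y⁻¹ hy (inv_ne_zero hy)
    rw [mul_inv_cancel₀ hy, hord1] at h
    omega
  have hordpow : ∀ y : F, y ≠ 0 → ∀ n : ℕ, ord (y ^ n) = n * ord y := by
    intro y hy n
    induction n with
    | zero => simpa using hord1
    | succ n ih =>
      rw [pow_succ, hmul _ _ (pow_ne_zero n hy) hy, ih]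
      push_cast
      ring
  have horddiv : ∀ a b : F, a ≠ 0 → b ≠ 0 → ord (a / b) = ord a - ord b := by
    intro a b ha hb
    rw [div_eq_mul_inv, hmul a b⁻¹ ha (inv_ne_zero hb), hordinv b hb]
    ring
  have hBmem : ∀ (n : ℤ) (y : F), y ∈ B n ↔ (y = 0 ∨ n ≤ ord y) := by
    intro n y
    rw [hB]
    rfl
  have hBadd : ∀ (n : ℤ) (y z : F), y ∈ B n → z ∈ B n → y + z ∈ B n := by
    intro n y z hy hz
    rw [hBmem] at hy hz ⊢
    by_cases hy0 : y = 0
    · simpa [hy0] using hz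
    by_cases hz0 : z = 0
    · simpa [hz0] using hy
    by_cases h0 : y + z = 0
    · exact Or.inl h0
    right
    have h1 : n ≤ ord y := hy.resolve_left hy0
    have h2 : n ≤ ord z := hz.resolve_left hz0
    have h3 := hult y z hy0 hz0 h0
    omega
  have hBneg : ∀ (n : ℤ) (y : F), y ∈ B n → -y ∈ B n := by
    intro n y hy
    rw [hBmem] at hy ⊢
    rcases hy with hy0 | hy
    · left; rw [hy0, neg_zero]
    · right; rw [hordneg]; exact hy
  have hBsub : ∀ (n : ℤ) (y z : F), y ∈ B n → z ∈ B n → y - z ∈ B n := by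
    intro n y z hy hz
    have := hBadd n y (-z) hy (hBneg n z hz)
    simpa [sub_eq_add_neg] using this
  -- psi facts
  have hψ0 : ψ 0 = 1 := hψtriv 0 (Or.inl rfl)
  have hψpow : ∀ (z : F) (n : ℕ), ψ z ^ n = ψ ((n : F) * z) := by
    intro z n
    induction n with
    | zero => simp [hψ0]
    | succ n ih =>
      rw [pow_succ, ih, ← hψadd]
      congr 1
      push_cast
      ring
  -- outer translation invariance
  have houterle : ∀ (a : F) (s : Set F), μ ((a + ·) ⁻¹' s) ≤ μ s := by
    intro a s
    calc μ ((a + ·) ⁻¹' s) ≤ μ ((a + ·) ⁻¹' (toMeasurable μ s)) :=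
          measure_mono (Set.preimage_mono (subset_toMeasurable μ s))
      _ = μ (toMeasurable μ s) := hμtrans a _ (measurableSet_toMeasurable μ s)
      _ = μ s := measure_toMeasurable s
  have houter : ∀ (a : F) (s : Set F), μ ((a + ·) ⁻¹' s) = μ s := by
    intro a s
    refine le_antisymm (houterle a s) ?_
    have h1 : μ ((-a + ·) ⁻¹' ((a + ·) ⁻¹' s)) ≤ μ ((a + ·) ⁻¹' s) := houterle (-a) _
    have heq : ((-a + ·) ⁻¹' ((a + ·) ⁻¹' s)) = s := by
      ext z
      simp [Set.mem_preimage]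
    rwa [heq] at h1
  -- pigeonhole: no infinite family of pairwise inequivalent elements of B 0
  have hB1sub : B 1 ⊆ B 0 := by
    intro z hz
    rw [hBmem] at hz ⊢
    rcases hz with h | h
    · exact Or.inl h
    · right; omega
  have hpigeon : ∀ g : ℕ → F, (∀ n, g n ∈ B 0) →
      ∃ m n, m < n ∧ g n - g m ∈ B 1 := by
    intro g hg
    by_contra hcon
    push_neg at hcon
    set c1 : ENNReal := ENNReal.ofReal (q ^ (-(1 : ℤ))) with hc1
    set S : ℕ → Set F := fun n => ((-(g n)) + ·) ⁻¹' (B 1) with hS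
    set U : ℕ → Set F := fun N => ⋃ n ∈ Finset.range N, S n with hU
    have hSsub : ∀ n, S n ⊆ B 0 := by
      intro n z hz
      have h1 : (-(g n) + z) ∈ B 1 := hz
      have h2 := hBadd 0 (g n) _ (hg n) (hB1sub h1)
      simpa using h2
    have hUmes : ∀ N, μ (U N) = N * c1 := by
      intro N
      induction N with
      | zero => simp [hU]
      | succ N ih =>
        have hsplit : U (N + 1) = S N ∪ U N := by
          simp only [hU]
          rw [Finset.range_add_one, Finset.set_biUnion_insert]
        have hpreS : (g N + ·) ⁻¹' (S N) = B 1 := by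
          ext z
          simp [hS]
        have hpre : (g N + ·) ⁻¹' (U (N + 1)) = ((g N + ·) ⁻¹' (U N)) ∪ B 1 := by
          rw [hsplit, Set.preimage_union, hpreS, Set.union_comm]
        have hdisj : Disjoint ((g N + ·) ⁻¹' (U N)) (B 1) := by
          rw [Set.disjoint_left]
          intro z hz hzB
          simp only [hU, Set.mem_preimage, Set.mem_iUnion, Finset.mem_range] at hz
          obtain ⟨n, hn, hzn⟩ := hz
          have h1 : -(g n) + (g N + z) ∈ B 1 := hzn
          have h2 := hBsub 1 _ z h1 hzB
          have key : (-(g n) + (g N + z)) - z = g N - g n := by ring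
          rw [key] at h2
          exact hcon n N hn h2
        calc μ (U (N + 1)) = μ ((g N + ·) ⁻¹' (U (N + 1))) := (houter _ _).symm
          _ = μ (((g N + ·) ⁻¹' (U N)) ∪ B 1) := by rw [hpre]
          _ = μ ((g N + ·) ⁻¹' (U N)) + μ (B 1) := measure_union hdisj (hmeasball 1)
          _ = μ (U N) + μ (B 1) := by rw [houter]
          _ = N * c1 + c1 := by rw [ih, hB, hμball 1]
          _ = (N + 1 : ℕ) * c1 := by push_cast; ring
    have hUle : ∀ N : ℕ, (N : ENNReal) * c1 ≤ 1 := by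
      intro N
      have hsub : U N ⊆ B 0 := by
        intro z hz
        simp only [hU, Set.mem_iUnion, Finset.mem_range] at hz
        obtain ⟨n, _, hzn⟩ := hz
        exact hSsub n hzn
      have h1 : μ (U N) ≤ μ (B 0) := measure_mono hsub
      rw [hUmes N, hB, hμball 0] at h1
      simpa using h1
    obtain ⟨N, hN⟩ := exists_nat_gt q
    have hq0 : (0 : ℝ) < q := lt_trans one_pos hq
    have hc1' : c1 = ENNReal.ofReal q⁻¹ := by
      rw [hc1]
      congr 1
      simp
    have h1 := hUle N
    rw [hc1', ← ENNReal.ofReal_natCast, ← ENNReal.ofReal_mul (by positivity),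
      ← ENNReal.ofReal_one] at h1
    have h2 := (ENNReal.ofReal_le_ofReal_iff (by norm_num)).1 h1
    have h3 : (N : ℝ) ≤ q := by
      have h4 := mul_le_mul_of_nonneg_right h2 (le_of_lt hq0)
      rw [one_mul, mul_assoc, inv_mul_cancel₀ (ne_of_gt hq0), mul_one] at h4
      exact h4
    linarith
  -- squares descend
  have hordtwo : ord (2 : F) = (e : ℤ) := he.symm
  have hsqdesc : ∀ a b : F, a ∈ B 0 → b ∈ B 0 → a ^ 2 - b ^ 2 ∈ B 1 → a - b ∈ B 1 := by
    intro a b ha hb hsq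
    by_cases hd : a - b = 0
    · rw [hBmem]; exact Or.inl hd
    have hdB0 : a - b ∈ B 0 := hBsub 0 a b ha hb
    have hd0 : 0 ≤ ord (a - b) := ((hBmem 0 _).1 hdB0).resolve_left hd
    have hterm : -(2 * b * (a - b)) ∈ B 1 := by
      apply hBneg
      rw [hBmem]
      by_cases hb0 : b = 0
      · left; rw [hb0]; ring
      · right
        have hb0' : 0 ≤ ord b := ((hBmem 0 _).1 hb).resolve_left hb0
        rw [hmul _ _ (mul_ne_zero h2F hb0) hd, hmul _ _ h2F hb0, hordtwo]
        have he1 : (1 : ℤ) ≤ (e : ℤ) := by exact_mod_cast hepos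
        omega
    have hsq2 : (a - b) ^ 2 ∈ B 1 := by
      have hid : (a - b) ^ 2 = (a ^ 2 - b ^ 2) + -(2 * b * (a - b)) := by ring
      rw [hid]
      exact hBadd 1 _ _ hsq hterm
    have h1 : 1 ≤ ord ((a - b) ^ 2) :=
      ((hBmem 1 _).1 hsq2).resolve_left (pow_ne_zero 2 hd)
    rw [hordpow _ hd 2] at h1
    rw [hBmem]
    right
    omega
  -- the nontrivial character point
  obtain ⟨x₀, hx₀ne, hx₀ord, hx₀ψ⟩ := hψnontriv
  have hψx₀ : ψ x₀ = -1 := by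
    have htriv : ψ (x₀ + x₀) = 1 := by
      apply hψtriv
      right
      have hx2 : x₀ + x₀ = 2 * x₀ := by ring
      rw [hx2, hmul 2 x₀ h2F hx₀ne, hordtwo, hx₀ord]
      have he1 : (1 : ℤ) ≤ (e : ℤ) := by exact_mod_cast hepos
      omega
    have hsq : ψ x₀ ^ 2 = 1 := by rw [pow_two, ← hψadd, htriv]
    have hfac : (ψ x₀ - 1) * (ψ x₀ + 1) = 0 := by linear_combination hsq
    rcases mul_eq_zero.1 hfac with h | h
    · exact absurd (sub_eq_zero.1 h) hx₀ψ
    · exact eq_neg_of_add_eq_zero_left h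
  -- w and its square root v mod B 1
  set w : F := x₀ * (ϖ * u * δ) with hw
  have hwne : w ≠ 0 :=
    mul_ne_zero hx₀ne (mul_ne_zero (mul_ne_zero hϖ0 hu) hδ)
  have hword : ord w = 0 := by
    rw [hw, hmul _ _ hx₀ne (mul_ne_zero (mul_ne_zero hϖ0 hu) hδ),
      hmul _ _ (mul_ne_zero hϖ0 hu) hδ, hmul _ _ hϖ0 hu, hx₀ord, hϖ, hu0]
    ring
  obtain ⟨v, hvne, hvord, hv⟩ :
      ∃ v : F, v ≠ 0 ∧ ord v = 0 ∧ v ^ 2 - w ∈ B 1 := by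
    have hgB : ∀ n : ℕ, w ^ (2 ^ n) ∈ B 0 := by
      intro n
      rw [hBmem]
      right
      rw [hordpow w hwne, hword]
      simp
    obtain ⟨m, n, hmn, hdiff⟩ := hpigeon (fun n => w ^ (2 ^ n)) hgB
    have hdesc : ∀ (j k : ℕ), w ^ (2 ^ j) - w ^ (2 ^ (j + k)) ∈ B 1 →
        w - w ^ (2 ^ k) ∈ B 1 := by
      intro j
      induction j with
      | zero => intro k h; simpa using h
      | succ j ih =>
        intro k h
        apply ih
        apply hsqdesc _ _ (hgB j) (hgB (j + k))
        have e1 : (w ^ (2 ^ j)) ^ 2 = w ^ (2 ^ (j + 1)) := by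
          rw [← pow_mul, pow_succ]
        have e2 : (w ^ (2 ^ (j + k))) ^ 2 = w ^ (2 ^ (j + 1 + k)) := by
          rw [← pow_mul, show j + 1 + k = (j + k) + 1 by omega, pow_succ]
        rw [e1, e2]
        exact h
    have hk1 : 1 ≤ n - m := by omega
    have hkeq : n = m + (n - m) := by omega
    have hd2 : w ^ (2 ^ m) - w ^ (2 ^ (m + (n - m))) ∈ B 1 := by
      have h2 := hBneg 1 _ hdiff
      rw [neg_sub] at h2
      rw [← hkeq]
      exact h2
    have hfin := hdesc m (n - m) hd2
    refine ⟨w ^ (2 ^ (n - m - 1)), pow_ne_zero _ hwne, ?_, ?_⟩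
    · rw [hordpow w hwne, hword]; ring
    · have hsqw : (w ^ (2 ^ (n - m - 1))) ^ 2 = w ^ (2 ^ (n - m)) := by
        rw [← pow_mul]
        congr 1
        rw [← pow_succ]
        congr 1
        omega
      rw [hsqw]
      have h3 := hBneg 1 _ hfin
      rw [neg_sub] at h3
      exact h3
  -- the shift c
  set c : F := ϖ ^ (r - 1) * v with hc
  have hcne : c ≠ 0 := by
    refine mul_ne_zero (pow_ne_zero _ hϖ0) hvne
  have hcord : ord c = (r : ℤ) - 1 := by
    rw [hc, hmul _ _ (pow_ne_zero _ hϖ0) hvne, hordpow ϖ hϖ0, hϖ, hvord,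
      Nat.cast_sub hr1]
    push_cast
    ring
  have hcO : c ∈ B 0 := by
    right
    rw [hcord]
    have : (1 : ℤ) ≤ (r : ℤ) := by exact_mod_cast hr1
    omega
  have hxne : x ≠ 0 := by
    rw [hx]; exact mul_ne_zero (pow_ne_zero _ hϖ0) hu
  have hxord : ord x = 2 * (r : ℤ) - 1 := by
    rw [hx, hmul _ _ (pow_ne_zero _ hϖ0) hu, hordpow ϖ hϖ0, hϖ, hu0,
      Nat.cast_sub (by omega : 1 ≤ 2 * r)]
    push_cast
    ring
  -- the key multiplicative shift property
  have hxδ : x * δ ≠ 0 := mul_ne_zero hxne hδ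
  have hϖuδ : ϖ * u * δ ≠ 0 := mul_ne_zero (mul_ne_zero hϖ0 hu) hδ
  have he1 : (1 : ℤ) ≤ (e : ℤ) := by exact_mod_cast hepos
  have hr1' : (1 : ℤ) ≤ (r : ℤ) := by exact_mod_cast hr1
  have hr2' : (r : ℤ) ≤ (e : ℤ) := by exact_mod_cast hr2
  have hordxδ : ord (x * δ) = 2 * (r : ℤ) - 1 + D := by
    rw [hmul x δ hxne hδ, hxord, hD]
  have hψc : ψ (c ^ 2 / (x * δ)) = -1 := by
    have hiden : c ^ 2 / (x * δ) = x₀ + (v ^ 2 - w) / (ϖ * u * δ) := by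
      have hrr : 2 * r - 1 = (r - 1) + (r - 1) + 1 := by omega
      have h1 : c ^ 2 / (x * δ) = v ^ 2 / (ϖ * u * δ) := by
        rw [div_eq_div_iff hxδ hϖuδ, hc, hx, hrr, pow_add, pow_add, pow_one]
        ring
      rw [h1, hw]
      field_simp
      ring
    rw [hiden, hψadd, hψx₀]
    have htr : ψ ((v ^ 2 - w) / (ϖ * u * δ)) = 1 := by
      apply hψtriv
      by_cases hvw : v ^ 2 - w = 0
      · left; rw [hvw]; simp
      · right
        have h1 : 1 ≤ ord (v ^ 2 - w) := ((hBmem 1 _).1 hv).resolve_left hvw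
        rw [horddiv _ _ hvw hϖuδ, hmul _ _ (mul_ne_zero hϖ0 hu) hδ,
          hmul _ _ hϖ0 hu, hϖ, hu0, ← hD]
        omega
    rw [htr]
    ring
  have hKey : ∀ t : F, t ∈ B 0 → f (t + c) = - f t := by
    intro t ht
    have hψcross : ψ (2 * t * c / (x * δ)) = 1 := by
      apply hψtriv
      by_cases ht0 : t = 0
      · left; rw [ht0]; simp
      · right
        have h2tc : 2 * t * c ≠ 0 := mul_ne_zero (mul_ne_zero h2F ht0) hcne
        rw [horddiv _ _ h2tc hxδ, hmul _ _ (mul_ne_zero h2F ht0) hcne,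
          hmul _ _ h2F ht0, hordtwo, hcord, hordxδ]
        have htord : 0 ≤ ord t := ((hBmem 0 _).1 ht).resolve_left ht0
        omega
    have hsum : (t + c) ^ 2 / (x * δ) =
        t ^ 2 / (x * δ) + (2 * t * c / (x * δ) + c ^ 2 / (x * δ)) := by
      field_simp
      ring
    simp only [hf]
    rw [hsum, hψadd, hψadd, hψcross, hψc]
    have hval : ψ (t ^ 2 / (x * δ)) * (1 * -1) = -(ψ (t ^ 2 / (x * δ))) := by ring
    rw [hval, map_neg]
  -- finite order of the values
  have hVal : ∀ t : F, t ∈ B 0 → (f t) ^ (2 ^ (2 * r - 1)) = 1 := by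
    intro t ht
    by_cases ht0 : t = 0
    · simp only [hf]
      rw [ht0]
      norm_num [hψ0]
    · simp only [hf]
      rw [← map_pow, hψpow]
      have htriv : ψ (((2 ^ (2 * r - 1) : ℕ) : F) * (t ^ 2 / (x * δ))) = 1 := by
        apply hψtriv
        right
        have hcast : ((2 ^ (2 * r - 1) : ℕ) : F) = (2 : F) ^ (2 * r - 1) := by
          push_cast
          ring
        rw [hcast]
        have hne2 : (2 : F) ^ (2 * r - 1) ≠ 0 := pow_ne_zero _ h2F
        have hq2 : t ^ 2 / (x * δ) ≠ 0 := div_ne_zero (pow_ne_zero _ ht0) hxδ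
        rw [hmul _ _ hne2 hq2, hordpow _ h2F, hordtwo,
          horddiv _ _ (pow_ne_zero _ ht0) hxδ, hordpow t ht0, hordxδ]
        have htord : 0 ≤ ord t := ((hBmem 0 _).1 ht).resolve_left ht0
        have hcast2 : ((2 * r - 1 : ℕ) : ℤ) = 2 * (r : ℤ) - 1 := by
          rw [Nat.cast_sub (by omega : 1 ≤ 2 * r)]
          push_cast
          ring
        rw [hcast2]
        push_cast
        nlinarith [he1, htord, hr1']
      rw [htriv]
      simp
  -- now the measure-theoretic endgame
  by_cases hInt : Integrable f ν
  swap
  · exact integral_undef hInt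
  have hO : MeasurableSet (B 0) := hmeasball 0
  haveI : IsFiniteMeasure ν := by
    constructor
    rw [hν, Measure.restrict_apply_univ, hB]
    rw [hμball 0]
    exact ENNReal.ofReal_lt_top
  obtain ⟨g, hgmeas, hfg⟩ : ∃ g, StronglyMeasurable g ∧ f =ᶠ[ae ν] g :=
    ⟨hInt.aestronglyMeasurable.mk f, hInt.aestronglyMeasurable.stronglyMeasurable_mk,
      hInt.aestronglyMeasurable.ae_eq_mk⟩
  set n₀ : ℕ := 2 ^ (2 * r - 1) with hn₀
  have hn₀pos : 0 < n₀ := Nat.pow_pos (by norm_num)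
  have hn₀even : Even n₀ := by
    refine (Nat.even_pow).2 ⟨even_two, ?_⟩
    omega
  set T : Finset ℂ := (Polynomial.nthRoots n₀ (1 : ℂ)).toFinset with hT
  have hmemT : ∀ z : ℂ, z ∈ T ↔ z ^ n₀ = 1 := by
    intro z
    rw [hT, Multiset.mem_toFinset, Polynomial.mem_nthRoots hn₀pos]
  set A' : ℂ → Set F := fun ζ => B 0 ∩ g ⁻¹' {ζ} with hA'
  have hA'meas : ∀ ζ, MeasurableSet (A' ζ) :=
    fun ζ => hO.inter (hgmeas.measurable (measurableSet_singleton ζ))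
  -- symmetric measures
  have hAsym : ∀ ζ : ℂ, ν (A' ζ) = ν (A' (-ζ)) := by
    have hbad : μ ({t : F | f t ≠ g t} ∩ B 0) = 0 := by
      have h0 : ν {t : F | f t ≠ g t} = 0 := ae_iff.1 hfg
      rw [hν, Measure.restrict_apply' hO] at h0
      exact h0
    set A : ℂ → Set F := fun ξ => {t : F | t ∈ B 0 ∧ f t = ξ} with hA
    have hAA' : ∀ ξ, μ (A' ξ) = μ (A ξ) := by
      intro ξ
      apply le_antisymm
      · calc μ (A' ξ) ≤ μ (A ξ ∪ ({t : F | f t ≠ g t} ∩ B 0)) := by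
              apply measure_mono
              intro t htm
              obtain ⟨ht0, htg⟩ := htm
              have htg' : g t = ξ := htg
              by_cases hft : f t = g t
              · left; exact ⟨ht0, by rw [hft, htg']⟩
              · right; exact ⟨hft, ht0⟩
          _ ≤ μ (A ξ) + μ ({t : F | f t ≠ g t} ∩ B 0) := measure_union_le _ _
          _ = μ (A ξ) := by rw [hbad, add_zero]
      · calc μ (A ξ) ≤ μ (A' ξ ∪ ({t : F | f t ≠ g t} ∩ B 0)) := by
              apply measure_mono
              intro t htm
              obtain ⟨ht0, htf⟩ := htm
              by_cases hft : f t = g t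
              · left
                refine ⟨ht0, ?_⟩
                show g t ∈ ({ξ} : Set ℂ)
                rw [← hft, htf]
                exact Set.mem_singleton ξ
              · right; exact ⟨hft, ht0⟩
          _ ≤ μ (A' ξ) + μ ({t : F | f t ≠ g t} ∩ B 0) := measure_union_le _ _
          _ = μ (A' ξ) := by rw [hbad, add_zero]
    have hmcO : -c ∈ B 0 := hBneg 0 c hcO
    have htrA : ∀ ξ : ℂ, A (-ξ) = ((-c) + ·) ⁻¹' (A ξ) := by
      intro ξ
      ext t
      simp only [Set.mem_preimage, hA, Set.mem_setOf_eq]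
      constructor
      · rintro ⟨htO, hft⟩
        have hs : -c + t ∈ B 0 := hBadd 0 (-c) t hmcO htO
        refine ⟨hs, ?_⟩
        have hk := hKey (-c + t) hs
        rw [show -c + t + c = t by ring] at hk
        rw [hft] at hk
        exact (neg_inj.1 hk).symm
      · rintro ⟨hsO, hfs⟩
        have htO : t ∈ B 0 := by
          have h1 := hBadd 0 c (-c + t) hcO hsO
          rwa [show c + (-c + t) = t by ring] at h1
        refine ⟨htO, ?_⟩
        have hk := hKey (-c + t) hsO
        rw [show -c + t + c = t by ring, hfs] at hk
        exact hk
    intro ζ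
    have hsub : ∀ ξ : ℂ, A' ξ ⊆ B 0 := fun ξ => Set.inter_subset_left
    calc ν (A' ζ) = μ (A' ζ ∩ B 0) := by rw [hν, Measure.restrict_apply' hO]
      _ = μ (A' ζ) := by rw [Set.inter_eq_self_of_subset_left (hsub ζ)]
      _ = μ (A ζ) := hAA' ζ
      _ = μ (A (-ζ)) := by rw [htrA ζ, houter]
      _ = μ (A' (-ζ)) := (hAA' (-ζ)).symm
      _ = μ (A' (-ζ) ∩ B 0) := by rw [Set.inter_eq_self_of_subset_left (hsub (-ζ))]
      _ = ν (A' (-ζ)) := by rw [hν, Measure.restrict_apply' hO]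
  -- decompose g
  have hgdec : g =ᶠ[ae ν] fun t => ∑ ζ ∈ T, (A' ζ).indicator (fun _ => ζ) t := by
    have h1 : ∀ᵐ t ∂ν, t ∈ B 0 := by
      rw [hν]
      exact ae_restrict_mem hO
    filter_upwards [h1, hfg] with t htO hfgt
    have hgT : g t ∈ T := by
      rw [hmemT, ← hfgt]
      exact hVal t htO
    have hsum : ∑ ζ ∈ T, (A' ζ).indicator (fun _ => ζ) t = g t := by
      rw [Finset.sum_eq_single_of_mem (g t) hgT]
      · exact Set.indicator_of_mem
          (show t ∈ A' (g t) from ⟨htO, Set.mem_singleton _⟩) _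
      · intro b _ hbne
        apply Set.indicator_of_notMem
        intro hmem
        exact hbne hmem.2.symm
    exact hsum.symm
  calc ∫ t in B 0, f t ∂μ = ∫ t, f t ∂ν := rfl
    _ = ∫ t, g t ∂ν := integral_congr_ae hfg
    _ = ∫ t, (∑ ζ ∈ T, (A' ζ).indicator (fun _ => ζ) t) ∂ν := integral_congr_ae hgdec
    _ = ∑ ζ ∈ T, ∫ t, (A' ζ).indicator (fun _ => ζ) t ∂ν := by
        refine integral_finset_sum _ (fun ζ _ => ?_)
        exact (integrable_const ζ).indicator (hA'meas ζ)
    _ = ∑ ζ ∈ T, (ν (A' ζ)).toReal • ζ := by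
        refine Finset.sum_congr rfl (fun ζ _ => ?_)
        exact integral_indicator_const ζ (hA'meas ζ)
    _ = 0 := by
        refine Finset.sum_involution (fun ζ _ => -ζ) ?_ ?_ ?_ ?_
        · intro ζ hζ
          rw [hAsym ζ, smul_neg]
          ring
        · intro ζ hζ hne
          intro hcontra
          apply hne
          have h2 : (2:ℂ) * ζ = 0 := by linear_combination -hcontra
          have : ζ = 0 := by
            rcases mul_eq_zero.1 h2 with h | h
            · norm_num at h
            · exact h
          simp [this]
        · intro ζ hζ
          rw [hmemT] at hζ ⊢
          rw [hn₀even.neg_pow, hζ]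
        · intro ζ hζ
          simp
end

section
/- Let $F$ be a finite extension of $\mathbb{Q}_p$ with ring of integers $\mathfrak{o}$, residue field of order $q$, $e = \mathrm{ord}(2)$, and let $\alpha_\psi$ be the Weil constant associated to an additive character $\psi$ of $F$ with conductor $\mathfrak{d}^{-1} = (\boldsymbol\delta^{-1})$, characterized by $\alpha_\psi(a) = |2a\boldsymbol\delta|^{-1/2} \int_{\mathfrak{o}} \psi(t^2/(4a\boldsymbol\delta^2))\, dt$ for nonzero $a \in \mathfrak{d}^{-1}\mathfrak{o}$ with this integral formula valid. Then $\int_{\mathfrak{o}^\times} \alpha_\psi(t/\boldsymbol\delta)\, dt = q^{-e/2}(1 - q^{-1})$ and $\int_{\mathfrak{o}^\times} \alpha_\psi(\varpi t/\boldsymbol\delta)\, dt = 0$. -/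
open MeasureTheory

open MeasureTheory

namespace S5

structure Ctx (F : Type*) [Field F] [MeasurableSpace F] where
  ord : F → ℤ
  q : ℝ
  μ : Measure F
  ψ : F → ℂ
  d : ℤ
  M : ℤ
  hq : 1 < q
  hmul : ∀ x y : F, x ≠ 0 → y ≠ 0 → ord (x * y) = ord x + ord y
  hult : ∀ x y : F, x ≠ 0 → y ≠ 0 → x + y ≠ 0 → min (ord x) (ord y) ≤ ord (x + y)
  hμtrans : ∀ (a : F) (s : Set F), MeasurableSet s → μ ((a + ·) ⁻¹' s) = μ s
  hμball : ∀ n : ℤ, μ {x : F | x = 0 ∨ n ≤ ord x} = ENNReal.ofReal (q ^ (-n))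
  hmeasball : ∀ n : ℤ, MeasurableSet {x : F | x = 0 ∨ n ≤ ord x}
  hψadd : ∀ x y : F, ψ (x + y) = ψ x * ψ y
  hψ1 : ∀ x : F, (x = 0 ∨ -d ≤ ord x) → ψ x = 1
  hM : 1 ≤ M

namespace Ctx

variable {F : Type*} [Field F] [MeasurableSpace F] (c : Ctx F)

def B (n : ℤ) : Set F := {x | x = 0 ∨ n ≤ c.ord x}

def U : Set F := {x | x ≠ 0 ∧ c.ord x = 0}

def cls (r : F) : Set F := {x | x - r ∈ c.B c.M}

lemma q_pos : 0 < c.q := lt_trans one_pos c.hq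

lemma ord_one : c.ord 1 = 0 := by
  have := c.hmul 1 1 one_ne_zero one_ne_zero
  simp at this; omega

lemma ord_neg_one : c.ord (-1) = 0 := by
  have := c.hmul (-1) (-1) (by simp) (by simp)
  simp [c.ord_one] at this; omega

lemma ord_neg (x : F) : c.ord (-x) = c.ord x := by
  rcases eq_or_ne x 0 with h | h
  · simp [h]
  · have := c.hmul (-1) x (by simp) h
    rw [neg_one_mul] at this
    rw [this, c.ord_neg_one]; ring

lemma ord_inv {x : F} (h : x ≠ 0) : c.ord x⁻¹ = -c.ord x := by
  have := c.hmul x x⁻¹ h (inv_ne_zero h)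
  rw [mul_inv_cancel₀ h, c.ord_one] at this; omega

lemma ord_add_eq {x h : F} (hx : x ≠ 0) (hh : h = 0 ∨ c.ord x < c.ord h) :
    x + h ≠ 0 ∧ c.ord (x + h) = c.ord x := by
  rcases eq_or_ne h 0 with rfl | hh0
  · simp [hx]
  have hlt : c.ord x < c.ord h := hh.resolve_left hh0
  have hne : x + h ≠ 0 := by
    rintro hsum
    have : h = -x := by linear_combination hsum
    rw [this, c.ord_neg] at hlt; omega
  refine ⟨hne, ?_⟩
  have h1 := c.hult x h hx hh0 hne
  have h2 := c.hult (x + h) (-h) hne (by simpa using hh0) (by simpa using hx)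
  simp only [add_neg_cancel_right] at h2
  rw [c.ord_neg] at h2
  omega

lemma zero_mem_B (n : ℤ) : (0 : F) ∈ c.B n := Or.inl rfl

lemma B_anti {n m : ℤ} (h : n ≤ m) : c.B m ⊆ c.B n := by
  rintro x (rfl | hx)
  · exact Or.inl rfl
  · exact Or.inr (le_trans h hx)

lemma add_mem_B {n : ℤ} {x y : F} (hx : x ∈ c.B n) (hy : y ∈ c.B n) : x + y ∈ c.B n := by
  rcases eq_or_ne x 0 with rfl | hx0
  · simpa using hy
  rcases eq_or_ne y 0 with rfl | hy0
  · simpa using hx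
  rcases eq_or_ne (x + y) 0 with h | h
  · exact Or.inl h
  have nx : n ≤ c.ord x := hx.resolve_left hx0
  have ny : n ≤ c.ord y := hy.resolve_left hy0
  have := c.hult x y hx0 hy0 h
  exact Or.inr (by omega)

lemma neg_mem_B {n : ℤ} {x : F} (hx : x ∈ c.B n) : -x ∈ c.B n := by
  rcases hx with rfl | hx
  · simp [c.zero_mem_B]
  · rcases eq_or_ne x 0 with rfl | h
    · simp [c.zero_mem_B]
    · exact Or.inr (by rw [c.ord_neg]; exact hx)

lemma sub_mem_B {n : ℤ} {x y : F} (hx : x ∈ c.B n) (hy : y ∈ c.B n) : x - y ∈ c.B n := by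
  rw [sub_eq_add_neg]; exact c.add_mem_B hx (c.neg_mem_B hy)

lemma measurableSet_B (n : ℤ) : MeasurableSet (c.B n) := c.hmeasball n

lemma measB (n : ℤ) : c.μ (c.B n) = ENNReal.ofReal (c.q ^ (-n)) := c.hμball n

lemma measB_ne_top (n : ℤ) : c.μ (c.B n) ≠ ⊤ := by
  rw [c.measB]; exact ENNReal.ofReal_ne_top

lemma meas_translate (r : F) {s : Set F} (hs : MeasurableSet s) :
    c.μ {x | x - r ∈ s} = c.μ s := by
  have : {x | x - r ∈ s} = ((-r) + ·) ⁻¹' s := by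
    ext x; simp [Set.mem_preimage, neg_add_eq_sub]
  rw [this]; exact c.hμtrans (-r) s hs

lemma self_mem_cls (r : F) : r ∈ c.cls r := by
  simp [cls, c.zero_mem_B]

lemma cls_congr {x r : F} (h : x ∈ c.cls r) : c.cls x = c.cls r := by
  ext y
  simp only [cls, Set.mem_setOf_eq] at *
  constructor
  · intro hy
    have := c.add_mem_B hy h
    simpa [sub_add_sub_cancel] using this
  · intro hy
    have := c.sub_mem_B hy h
    simpa [sub_sub_sub_cancel_right] using this

lemma cls_disjoint {r r' : F} (h : c.cls r ≠ c.cls r') : Disjoint (c.cls r) (c.cls r') := by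
  rw [Set.disjoint_left]
  intro x hx hx'
  exact h ((c.cls_congr hx).symm.trans (c.cls_congr hx'))

lemma cls_subset_B {r : F} {n : ℤ} (hn : n ≤ c.M) (hr : r ∈ c.B n) : c.cls r ⊆ c.B n := by
  intro x hx
  have : x - r ∈ c.B n := c.B_anti hn hx
  have := c.add_mem_B this hr
  simpa using this

lemma mem_cls_B {x r : F} {n : ℤ} (hn : n ≤ c.M) (hx : x ∈ c.B n) (hxr : x ∈ c.cls r) :
    r ∈ c.B n := by
  have : x - r ∈ c.B n := c.B_anti hn hxr
  have := c.sub_mem_B hx this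
  simpa using this

lemma meas_cls (r : F) : c.μ (c.cls r) = ENNReal.ofReal (c.q ^ (-c.M)) := by
  rw [cls, c.meas_translate r (c.measurableSet_B c.M), c.measB]

lemma cls_subset_B0 {r : F} (hr : r ∈ c.B 0) : c.cls r ⊆ c.B 0 :=
  c.cls_subset_B (le_trans zero_le_one c.hM) hr

/-- Measurable kernel inside a class: measurable `K ⊆ cls r` of full measure. -/
lemma kernel {r : F} (hr : r ∈ c.B 0) :
    ∃ K : Set F, MeasurableSet K ∧ K ⊆ c.cls r ∧ c.μ (c.cls r \ K) = 0 ∧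
      c.μ K = ENNReal.ofReal (c.q ^ (-c.M)) := by
  classical
  set C := c.cls r with hC
  set D := c.B 0 \ C with hD
  have hM0 : (0:ℤ) ≤ c.M := le_trans zero_le_one c.hM
  have hCB : C ⊆ c.B 0 := c.cls_subset_B0 hr
  have hBM0 : c.B c.M ⊆ c.B 0 := c.B_anti hM0
  -- μ C
  have hmC : c.μ C = ENNReal.ofReal (c.q ^ (-c.M)) := c.meas_cls r
  -- D as a translate of B 0 \ B M
  have hDeq : D = {x | x - r ∈ c.B 0 \ c.B c.M} := by
    ext x
    simp only [hD, Set.mem_diff, Set.mem_setOf_eq, hC, cls]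
    constructor
    · rintro ⟨hx, hxc⟩
      exact ⟨by simpa using c.sub_mem_B hx hr, hxc⟩
    · rintro ⟨hx, hxc⟩
      refine ⟨by simpa using c.add_mem_B hx hr, hxc⟩
  have hmD : c.μ D = c.μ (c.B 0) - c.μ (c.B c.M) := by
    rw [hDeq, c.meas_translate r ((c.measurableSet_B 0).diff (c.measurableSet_B c.M)),
      measure_diff hBM0 (c.measurableSet_B c.M).nullMeasurableSet (c.measB_ne_top _)]
  -- measurable hulls inside B 0
  obtain ⟨H₀, hCH, hHmeas, hHμ⟩ := exists_measurable_superset c.μ C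
  obtain ⟨G₀, hDG, hGmeas, hGμ⟩ := exists_measurable_superset c.μ D
  set H := H₀ ∩ c.B 0 with hH
  set G := G₀ ∩ c.B 0 with hG
  have hCH' : C ⊆ H := Set.subset_inter hCH hCB
  have hDG' : D ⊆ G := Set.subset_inter hDG (Set.diff_subset)
  have hHmeas' : MeasurableSet H := hHmeas.inter (c.measurableSet_B 0)
  have hGmeas' : MeasurableSet G := hGmeas.inter (c.measurableSet_B 0)
  have hHμ' : c.μ H = c.μ C :=
    le_antisymm (le_trans (measure_mono Set.inter_subset_left) hHμ.le) (measure_mono hCH')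
  have hGμ' : c.μ G = c.μ D :=
    le_antisymm (le_trans (measure_mono Set.inter_subset_left) hGμ.le) (measure_mono hDG')
  have hHG : H ∪ G = c.B 0 := by
    apply le_antisymm
    · exact Set.union_subset Set.inter_subset_right Set.inter_subset_right
    · intro x hx
      by_cases hxC : x ∈ C
      · exact Or.inl (hCH' hxC)
      · exact Or.inr (hDG' ⟨hx, hxC⟩)
  have hsum : c.μ H + c.μ G = c.μ (c.B 0) := by
    rw [hHμ', hGμ', hmC, ← c.measB c.M, hmD]
    exact add_tsub_cancel_of_le (measure_mono hBM0)
  have hinter : c.μ (H ∩ G) = 0 := by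
    have h1 := measure_union_add_inter (μ := c.μ) H hGmeas'
    rw [hHG, hsum] at h1
    have hfin : c.μ (c.B 0) ≠ ⊤ := c.measB_ne_top 0
    exact (ENNReal.add_right_inj hfin).mp (h1.trans (add_zero _).symm)
  refine ⟨H \ G, hHmeas'.diff hGmeas', ?_, ?_, ?_⟩
  · intro x hx
    rcases hx with ⟨hxH, hxG⟩
    have hxB : x ∈ c.B 0 := by rw [← hHG]; exact Or.inl hxH
    by_contra hxC
    exact hxG (hDG' ⟨hxB, hxC⟩)
  · have : C \ (H \ G) ⊆ H ∩ G := by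
      intro x hx
      rcases hx with ⟨hxC, hxnot⟩
      refine ⟨hCH' hxC, ?_⟩
      by_contra hxG
      exact hxnot ⟨hCH' hxC, hxG⟩
    exact measure_mono_null this hinter
  · have : H \ G = H \ (H ∩ G) := by
      ext x; simp only [Set.mem_diff, Set.mem_inter_iff]; tauto
    rw [this, measure_diff Set.inter_subset_left (hHmeas'.inter hGmeas').nullMeasurableSet
      (by rw [hinter]; exact ENNReal.zero_ne_top), hinter, tsub_zero, hHμ', hmC]

lemma kernel' (r : F) :
    ∃ K : Set F, MeasurableSet K ∧ K ⊆ c.cls r ∧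
      (r ∈ c.B 0 → c.μ (c.cls r \ K) = 0 ∧ c.μ K = ENNReal.ofReal (c.q ^ (-c.M))) := by
  by_cases hr : r ∈ c.B 0
  · obtain ⟨K, h1, h2, h3, h4⟩ := c.kernel hr
    exact ⟨K, h1, h2, fun _ => ⟨h3, h4⟩⟩
  · exact ⟨∅, MeasurableSet.empty, Set.empty_subset _, fun h => absurd h hr⟩

lemma cls_image_finite : ((fun r => c.cls r) '' (c.B 0)).Finite := by
  classical
  by_contra hinf
  have hinf' : ((fun r => c.cls r) '' (c.B 0)).Infinite := hinf
  let f := hinf'.natEmbedding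
  have hex : ∀ n : ℕ, ∃ r, r ∈ c.B 0 ∧ c.cls r = (f n : Set F) := by
    intro n
    obtain ⟨r, hr, hrc⟩ := (f n).2
    exact ⟨r, hr, hrc⟩
  choose r hr hrc using hex
  choose K hK1 hK2 hK3 using fun n => c.kernel (hr n)
  have hdisj : ∀ m n : ℕ, m ≠ n → Disjoint (K m) (K n) := by
    intro m n hmn
    have hne : c.cls (r m) ≠ c.cls (r n) := by
      rw [hrc m, hrc n]
      intro h
      exact hmn (f.injective (Subtype.coe_injective h))
    exact Set.disjoint_of_subset (hK2 m) (hK2 n) (c.cls_disjoint hne)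
  have hq0 : (0:ℝ) < c.q := c.q_pos
  obtain ⟨N, hN⟩ := exists_nat_gt (c.q ^ (c.M))
  have hsub : (⋃ i ∈ Finset.range N, K i) ⊆ c.B 0 := by
    intro x hx
    simp only [Set.mem_iUnion] at hx
    obtain ⟨i, _, hxi⟩ := hx
    exact c.cls_subset_B0 (hr i) (hK2 i hxi)
  have hμle : c.μ (⋃ i ∈ Finset.range N, K i) ≤ c.μ (c.B 0) := measure_mono hsub
  rw [measure_biUnion_finset (fun i _ j _ hij => hdisj i j hij) (fun i _ => hK1 i)] at hμle
  have hKμ : ∀ i, c.μ (K i) = ENNReal.ofReal (c.q ^ (-c.M)) := fun i => (hK3 i).2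
  simp only [hKμ, Finset.sum_const, Finset.card_range, nsmul_eq_mul] at hμle
  rw [c.measB, ← ENNReal.ofReal_natCast N, ← ENNReal.ofReal_mul (by positivity)] at hμle
  rw [ENNReal.ofReal_le_ofReal_iff (by positivity)] at hμle
  have hpow : (0:ℝ) < c.q ^ (-c.M) := zpow_pos hq0 _
  have : (N : ℝ) * c.q ^ (-c.M) > c.q ^ c.M * c.q ^ (-c.M) := by
    exact mul_lt_mul_of_pos_right hN hpow
  rw [← zpow_add₀ (ne_of_gt hq0)] at this
  simp only [add_neg_cancel, zpow_zero, neg_zero] at this hμle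
  linarith

lemma master {S : Finset F} (hS0 : ∀ r ∈ S, r ∈ c.B 0)
    (hdis : ∀ r ∈ S, ∀ r' ∈ S, r ≠ r' → c.cls r ≠ c.cls r')
    {E : Set F} (hE : MeasurableSet E) (hcover : E = ⋃ r ∈ S, c.cls r)
    {f : F → ℂ} (hf : ∀ r ∈ S, ∀ x ∈ c.cls r, f x = f r) :
    ∫ x in E, f x ∂c.μ = ∑ r ∈ S, f r * ((c.q ^ (-c.M) : ℝ) : ℂ) := by
  classical
  choose K hK1 hK2 hK3 using fun r => c.kernel' r
  have hKnull : ∀ r ∈ S, c.μ (c.cls r \ K r) = 0 := fun r hr => (hK3 r (hS0 r hr)).1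
  have hKμ : ∀ r ∈ S, c.μ (K r) = ENNReal.ofReal (c.q ^ (-c.M)) :=
    fun r hr => (hK3 r (hS0 r hr)).2
  have hN : c.μ (⋃ r ∈ (S : Set F), (c.cls r \ K r)) = 0 :=
    (measure_biUnion_null_iff S.countable_toSet).2 (fun r hr => hKnull r hr)
  have hptwise : ∀ x ∉ (⋃ r ∈ (S : Set F), (c.cls r \ K r)),
      E.indicator f x = ∑ r ∈ S, Set.indicator (K r) (fun _ => f r) x := by
    intro x hx
    simp only [Set.mem_iUnion, not_exists] at hx
    by_cases hxE : x ∈ E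
    · have hxE' := hxE
      rw [hcover] at hxE'
      simp only [Set.mem_iUnion] at hxE'
      obtain ⟨r₀, hr₀, hxr₀⟩ := hxE'
      have hxK : x ∈ K r₀ := by
        by_contra hxK
        exact hx r₀ (Finset.mem_coe.mpr hr₀) ⟨hxr₀, hxK⟩
      rw [Set.indicator_of_mem hxE]
      rw [Finset.sum_eq_single r₀]
      · rw [Set.indicator_of_mem hxK, hf r₀ hr₀ x hxr₀]
      · intro r hr hrne
        apply Set.indicator_of_notMem
        intro hxKr
        have : c.cls r = c.cls r₀ :=
          (c.cls_congr (hK2 r hxKr)).symm.trans (c.cls_congr hxr₀)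
        exact hdis r hr r₀ hr₀ hrne this
      · intro h; exact absurd hr₀ h
    · rw [Set.indicator_of_notMem hxE]
      symm
      apply Finset.sum_eq_zero
      intro r hr
      apply Set.indicator_of_notMem
      intro hxK
      apply hxE
      rw [hcover]
      simp only [Set.mem_iUnion]
      exact ⟨r, hr, hK2 r hxK⟩
  have hae : E.indicator f =ᵐ[c.μ] (fun x => ∑ r ∈ S, Set.indicator (K r) (fun _ => f r) x) := by
    apply measure_mono_null _ hN
    intro x hx
    simp only [Set.mem_setOf_eq, Set.mem_compl_iff] at *
    by_contra hxN
    exact hx (hptwise x hxN)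
  rw [← integral_indicator hE, integral_congr_ae hae]
  rw [integral_finset_sum _ (fun r hr => (integrable_indicator_iff (hK1 r)).2
    ((integrableOn_const_iff (by simp)).2 (Or.inr (by rw [hKμ r hr]; exact ENNReal.ofReal_lt_top))))]
  apply Finset.sum_congr rfl
  intro r hr
  rw [integral_indicator_const _ (hK1 r), measureReal_def, hKμ r hr,
    ENNReal.toReal_ofReal (le_of_lt (zpow_pos c.q_pos _))]
  rw [Complex.real_smul, mul_comm]

lemma count {S : Finset F} (hS0 : ∀ r ∈ S, r ∈ c.B 0)
    (hdis : ∀ r ∈ S, ∀ r' ∈ S, r ≠ r' → c.cls r ≠ c.cls r')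
    {E : Set F} (hE : MeasurableSet E) (hcover : E = ⋃ r ∈ S, c.cls r) :
    (S.card : ℂ) * ((c.q ^ (-c.M) : ℝ) : ℂ) = (((c.μ E).toReal : ℝ) : ℂ) := by
  have h := c.master hS0 hdis hE hcover (f := fun _ => (1:ℂ)) (by intros; rfl)
  rw [setIntegral_const] at h
  simp only [Finset.sum_const, nsmul_eq_mul, one_mul, mul_one, Complex.real_smul] at h
  rw [← h]
  rfl

noncomputable def pick (C : Set F) : F :=
  @dite _ (C ∈ ((fun r => c.cls r) '' (c.B 0))) (Classical.dec _) (fun h => h.choose) (fun _ => 0)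

lemma pick_spec {C : Set F} (h : C ∈ ((fun r => c.cls r) '' (c.B 0))) :
    c.pick C ∈ c.B 0 ∧ c.cls (c.pick C) = C := by
  rw [pick, dif_pos h]
  exact ⟨h.choose_spec.1, h.choose_spec.2⟩

noncomputable def R : Finset F :=
  @Finset.image _ _ (Classical.decEq F) c.pick c.cls_image_finite.toFinset

lemma rep_mem {x : F} (hx : x ∈ c.B 0) :
    c.pick (c.cls x) ∈ c.R ∧ x ∈ c.cls (c.pick (c.cls x)) ∧ c.pick (c.cls x) ∈ c.B 0 := by
  classical
  have hmem : c.cls x ∈ ((fun r => c.cls r) '' (c.B 0)) := ⟨x, hx, rfl⟩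
  obtain ⟨h1, h2⟩ := c.pick_spec hmem
  refine ⟨?_, by rw [h2]; exact c.self_mem_cls x, h1⟩
  rw [R, Finset.mem_image]
  exact ⟨c.cls x, by rw [Set.Finite.mem_toFinset]; exact hmem, rfl⟩

lemma R_subset {r : F} (hr : r ∈ c.R) : r ∈ c.B 0 := by
  classical
  rw [R, Finset.mem_image] at hr
  obtain ⟨C, hC, rfl⟩ := hr
  rw [Set.Finite.mem_toFinset] at hC
  exact (c.pick_spec hC).1

lemma pick_cls_self {r : F} (hr : r ∈ c.R) : c.pick (c.cls r) = r := by
  classical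
  rw [R, Finset.mem_image] at hr
  obtain ⟨C, hC, rfl⟩ := hr
  rw [Set.Finite.mem_toFinset] at hC
  rw [(c.pick_spec hC).2]

lemma R_cls_inj {r r' : F} (hr : r ∈ c.R) (hr' : r' ∈ c.R) (hne : r ≠ r') :
    c.cls r ≠ c.cls r' := by
  intro h
  exact hne (by rw [← c.pick_cls_self hr, h, c.pick_cls_self hr'])

/-- The representative of (the class of) an element of `B 0`. -/
noncomputable def rep (x : F) : F := c.pick (c.cls x)

lemma rep_cls {x : F} (hx : x ∈ c.B 0) : c.cls (c.rep x) = c.cls x :=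
  (c.cls_congr ((c.rep_mem hx).2.1)).symm

lemma rep_sub_mem {x : F} (hx : x ∈ c.B 0) : x - c.rep x ∈ c.B c.M := (c.rep_mem hx).2.1

lemma rep_mem_R {x : F} (hx : x ∈ c.B 0) : c.rep x ∈ c.R := (c.rep_mem hx).1

lemma rep_eq_self {r : F} (hr : r ∈ c.R) : c.rep r = r := c.pick_cls_self hr

lemma rep_congr {x y : F} (hx : x ∈ c.B 0) (h : x - y ∈ c.B c.M) (hy : y ∈ c.B 0) :
    c.rep x = c.rep y := by
  unfold rep
  congr 1
  have : x ∈ c.cls y := h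
  exact c.cls_congr this

/-- classical filter on `R`. -/
noncomputable def Rfil (P : F → Prop) : Finset F :=
  @Finset.filter F P (Classical.decPred P) c.R

lemma mem_Rfil {P : F → Prop} {r : F} : r ∈ c.Rfil P ↔ r ∈ c.R ∧ P r := by
  classical
  rw [Rfil, Finset.mem_filter]

/-- unit residues -/
noncomputable def RU : Finset F := c.Rfil (fun r => r ∉ c.B 1)

lemma mem_RU_iff {r : F} : r ∈ c.RU ↔ r ∈ c.R ∧ r ≠ 0 ∧ c.ord r = 0 := by
  rw [RU, mem_Rfil]
  constructor
  · rintro ⟨h1, h2⟩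
    have hr0 : r ∈ c.B 0 := c.R_subset h1
    have hne : r ≠ 0 := by rintro rfl; exact h2 (c.zero_mem_B 1)
    refine ⟨h1, hne, ?_⟩
    have := hr0.resolve_left hne
    rcases lt_or_ge (c.ord r) 1 with h | h
    · omega
    · exact absurd (Or.inr h) h2
  · rintro ⟨h1, h2, h3⟩
    refine ⟨h1, ?_⟩
    rintro (rfl | hord)
    · exact h2 rfl
    · omega

lemma mem_cls_unit {r x : F} (hr : r ≠ 0) (hord : c.ord r = 0) (hx : x ∈ c.cls r) :
    x ≠ 0 ∧ c.ord x = 0 := by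
  have hsub : x - r ∈ c.B c.M := hx
  have : x = r + (x - r) := by ring
  rw [this]
  have := c.ord_add_eq hr (h := x - r) ?_
  · exact ⟨this.1, by rw [this.2, hord]⟩
  · rcases hsub with h0 | h0
    · exact Or.inl h0
    · right; have := c.hM; omega

lemma inv_cong {u v : F} (hu : u ≠ 0) (hu0 : c.ord u = 0) (hv : v ≠ 0) (hv0 : c.ord v = 0)
    (h : v - u⁻¹ ∈ c.B c.M) : v⁻¹ - u ∈ c.B c.M := by
  have hvinv : v⁻¹ ≠ 0 := inv_ne_zero hv
  have key : v⁻¹ - u = -(u * v⁻¹ * (v - u⁻¹)) := by field_simp; ring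
  rcases eq_or_ne (v - u⁻¹) 0 with h0 | h0
  · rw [key, h0, mul_zero, neg_zero]; exact c.zero_mem_B _
  rcases eq_or_ne (v⁻¹ - u) 0 with h1 | h1
  · rw [h1]; exact c.zero_mem_B _
  right
  rw [key, c.ord_neg]
  have hprod : u * v⁻¹ ≠ 0 := mul_ne_zero hu hvinv
  rw [c.hmul _ _ hprod h0, c.hmul _ _ hu hvinv, c.ord_inv hv, hu0, hv0]
  have := h.resolve_left h0
  omega

lemma cover_Rfil_B {j : ℤ} (h0 : 0 ≤ j) (hjM : j ≤ c.M) :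
    c.B j = ⋃ r ∈ (c.Rfil (· ∈ c.B j) : Finset F), c.cls r := by
  ext x
  simp only [Set.mem_iUnion, exists_prop]
  constructor
  · intro hx
    have hx0 : x ∈ c.B 0 := c.B_anti h0 hx
    refine ⟨c.rep x, ?_, (c.rep_mem hx0).2.1⟩
    rw [mem_Rfil]
    exact ⟨c.rep_mem_R hx0, c.mem_cls_B hjM hx ((c.rep_mem hx0).2.1)⟩
  · rintro ⟨r, hr, hxr⟩
    rw [mem_Rfil] at hr
    exact c.cls_subset_B hjM hr.2 hxr

lemma cover_RU : c.U = ⋃ r ∈ c.RU, c.cls r := by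
  ext x
  simp only [Set.mem_iUnion, exists_prop]
  constructor
  · rintro ⟨hx0, hxord⟩
    have hxB : x ∈ c.B 0 := Or.inr (le_of_eq hxord.symm)
    refine ⟨c.rep x, ?_, (c.rep_mem hxB).2.1⟩
    rw [mem_RU_iff]
    refine ⟨c.rep_mem_R hxB, ?_⟩
    have hsub : x - c.rep x ∈ c.B c.M := c.rep_sub_mem hxB
    have hrx : c.rep x = x + (c.rep x - x) := by ring
    have hmem : c.rep x - x ∈ c.B c.M := by
      have := c.neg_mem_B hsub
      simpa using this
    have := c.ord_add_eq hx0 (h := c.rep x - x) ?_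
    · rw [← hrx] at this
      exact ⟨this.1, by rw [this.2, hxord]⟩
    · rcases hmem with h0 | h0
      · exact Or.inl h0
      · right; have := c.hM; omega
  · rintro ⟨r, hr, hxr⟩
    rw [mem_RU_iff] at hr
    exact c.mem_cls_unit hr.2.1 hr.2.2 hxr

lemma psi_zero : c.ψ 0 = 1 := c.hψ1 0 (Or.inl rfl)

lemma psi_cls {cc x y : F} (hcc : ∀ z ∈ c.B c.M, c.ψ (cc * z) = 1)
    (h : x - y ∈ c.B c.M) : c.ψ (cc * x) = c.ψ (cc * y) := by
  have : cc * x = cc * y + cc * (x - y) := by ring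
  rw [this, c.hψadd, hcc _ h, mul_one]

lemma sum_shift {E : Set F} (hEB : E ⊆ c.B 0) {S : Finset F}
    (hS : ∀ x ∈ E, c.rep x ∈ S) (hSE : ∀ r ∈ S, r ∈ E) (hSR : S ⊆ c.R)
    (h : F) (hEh : ∀ x ∈ E, x + h ∈ E) (hEh' : ∀ x ∈ E, x - h ∈ E)
    {cc : F} (hcc : ∀ z ∈ c.B c.M, c.ψ (cc * z) = 1) :
    (∑ r ∈ S, c.ψ (cc * r)) = c.ψ (cc * h) * ∑ r ∈ S, c.ψ (cc * r) := by
  have step : ∑ r ∈ S, c.ψ (cc * r) = ∑ r ∈ S, (c.ψ (cc * r) * c.ψ (cc * h)) := by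
    apply Finset.sum_nbij' (i := fun r => c.rep (r - h)) (j := fun r => c.rep (r + h))
    · intro a ha
      exact hS _ (hEh' _ (hSE _ ha))
    · intro a ha
      exact hS _ (hEh _ (hSE _ ha))
    · intro a ha
      have haE : a ∈ E := hSE _ ha
      have h1 : a - h ∈ E := hEh' _ haE
      have h2 : (a - h) - c.rep (a - h) ∈ c.B c.M := c.rep_sub_mem (hEB h1)
      have h3 : c.rep (a - h) ∈ E := hSE _ (hS _ h1)
      have h4 : c.rep (a - h) + h ∈ E := hEh _ h3
      have h5 : (c.rep (a - h) + h) - a ∈ c.B c.M := by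
        have := c.neg_mem_B h2
        have heq : (c.rep (a - h) + h) - a = -((a - h) - c.rep (a - h)) := by ring
        rw [heq]; exact this
      rw [c.rep_congr (hEB h4) h5 (hEB haE), c.rep_eq_self (hSR ha)]
    · intro a ha
      have haE : a ∈ E := hSE _ ha
      have h1 : a + h ∈ E := hEh _ haE
      have h2 : (a + h) - c.rep (a + h) ∈ c.B c.M := c.rep_sub_mem (hEB h1)
      have h3 : c.rep (a + h) ∈ E := hSE _ (hS _ h1)
      have h4 : c.rep (a + h) - h ∈ E := hEh' _ h3
      have h5 : (c.rep (a + h) - h) - a ∈ c.B c.M := by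
        have := c.neg_mem_B h2
        have heq : (c.rep (a + h) - h) - a = -((a + h) - c.rep (a + h)) := by ring
        rw [heq]; exact this
      rw [c.rep_congr (hEB h4) h5 (hEB haE), c.rep_eq_self (hSR ha)]
    · intro a ha
      have haE : a ∈ E := hSE _ ha
      have h1 : a - h ∈ E := hEh' _ haE
      have h2 : c.rep (a - h) - (a - h) ∈ c.B c.M := by
        have := c.neg_mem_B (c.rep_sub_mem (hEB h1))
        simpa using this
      rw [c.psi_cls hcc h2, ← c.hψadd]
      congr 1
      ring
  conv_lhs => rw [step]
  rw [← Finset.sum_mul, mul_comm]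

lemma sum_shift_zero {E : Set F} (hEB : E ⊆ c.B 0) {S : Finset F}
    (hS : ∀ x ∈ E, c.rep x ∈ S) (hSE : ∀ r ∈ S, r ∈ E) (hSR : S ⊆ c.R)
    (h : F) (hEh : ∀ x ∈ E, x + h ∈ E) (hEh' : ∀ x ∈ E, x - h ∈ E)
    {cc : F} (hcc : ∀ z ∈ c.B c.M, c.ψ (cc * z) = 1) (hne : c.ψ (cc * h) ≠ 1) :
    (∑ r ∈ S, c.ψ (cc * r)) = 0 := by
  have hstep := c.sum_shift hEB hS hSE hSR h hEh hEh' hcc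
  have hz : (1 - c.ψ (cc * h)) * (∑ r ∈ S, c.ψ (cc * r)) = 0 := by
    linear_combination hstep
  rcases mul_eq_zero.mp hz with h1 | h1
  · exact absurd (by linear_combination -h1) hne
  · exact h1

lemma sum_inv {cc : F} (hcc : ∀ z ∈ c.B c.M, c.ψ (cc * z) = 1) :
    ∑ r ∈ c.RU, c.ψ (cc * r⁻¹) = ∑ r ∈ c.RU, c.ψ (cc * r) := by
  have hmemi : ∀ a ∈ c.RU, c.rep a⁻¹ ∈ c.RU := by
    intro a ha
    rw [mem_RU_iff] at ha
    obtain ⟨haR, ha0, haord⟩ := ha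
    have hai : a⁻¹ ≠ 0 := inv_ne_zero ha0
    have haiord : c.ord a⁻¹ = 0 := by rw [c.ord_inv ha0, haord]; ring
    have haiB : a⁻¹ ∈ c.B 0 := Or.inr (le_of_eq haiord.symm)
    rw [mem_RU_iff]
    refine ⟨c.rep_mem_R haiB, ?_⟩
    have hv : c.rep a⁻¹ ∈ c.cls a⁻¹ := by
      rw [← c.rep_cls haiB]
      exact c.self_mem_cls _
    exact c.mem_cls_unit hai haiord hv
  have hinv : ∀ a ∈ c.RU, c.rep ((c.rep a⁻¹)⁻¹) = a := by
    intro a ha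
    have hva := hmemi a ha
    rw [mem_RU_iff] at ha hva
    obtain ⟨haR, ha0, haord⟩ := ha
    obtain ⟨hvR, hv0, hvord⟩ := hva
    set v := c.rep a⁻¹ with hv
    have hai : a⁻¹ ≠ 0 := inv_ne_zero ha0
    have haiord : c.ord a⁻¹ = 0 := by rw [c.ord_inv ha0, haord]; ring
    have haiB : a⁻¹ ∈ c.B 0 := Or.inr (le_of_eq haiord.symm)
    have hsub : v - a⁻¹ ∈ c.B c.M := by
      have := c.neg_mem_B (c.rep_sub_mem haiB)
      simpa using this
    have hkey : v⁻¹ - a ∈ c.B c.M := c.inv_cong ha0 haord hv0 hvord hsub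
    have hviord : c.ord v⁻¹ = 0 := by rw [c.ord_inv hv0, hvord]; ring
    have hviB : v⁻¹ ∈ c.B 0 := Or.inr (le_of_eq hviord.symm)
    rw [c.rep_congr hviB hkey (c.R_subset haR), c.rep_eq_self haR]
  apply Finset.sum_nbij' (i := fun r => c.rep r⁻¹) (j := fun r => c.rep r⁻¹)
  · exact hmemi
  · exact hmemi
  · exact hinv
  · exact hinv
  · intro a ha
    rw [mem_RU_iff] at ha
    obtain ⟨haR, ha0, haord⟩ := ha
    have haiB : a⁻¹ ∈ c.B 0 := Or.inr (by rw [c.ord_inv ha0, haord]; norm_num)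
    have h2 : c.rep a⁻¹ - a⁻¹ ∈ c.B c.M := by
      have := c.neg_mem_B (c.rep_sub_mem haiB)
      simpa using this
    exact (c.psi_cls hcc h2).symm

lemma rep_mem_RU {x : F} (hx : x ∈ c.U) : c.rep x ∈ c.RU := by
  obtain ⟨hx0, hxord⟩ := hx
  have hxB : x ∈ c.B 0 := Or.inr (le_of_eq hxord.symm)
  rw [mem_RU_iff]
  refine ⟨c.rep_mem_R hxB, ?_⟩
  have hv : c.rep x ∈ c.cls x := by
    rw [← c.rep_cls hxB]
    exact c.self_mem_cls _
  exact c.mem_cls_unit hx0 hxord hv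

lemma U_eq : c.U = c.B 0 \ c.B 1 := by
  ext x
  simp only [U, B, Set.mem_diff, Set.mem_setOf_eq]
  constructor
  · rintro ⟨h0, hord⟩
    exact ⟨Or.inr (le_of_eq hord.symm), by rintro (rfl | h); exact h0 rfl; omega⟩
  · rintro ⟨h0, h1⟩
    push_neg at h1
    obtain ⟨hne, hlt⟩ := h1
    rcases h0 with rfl | h0
    · exact absurd rfl hne
    · exact ⟨hne, by omega⟩

lemma measU : c.μ c.U = ENNReal.ofReal (1 - c.q⁻¹) := by
  rw [U_eq, measure_diff (c.B_anti (by norm_num)) (c.measurableSet_B 1).nullMeasurableSet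
    (c.measB_ne_top 1), c.measB, c.measB]
  rw [← ENNReal.ofReal_sub _ (le_of_lt (zpow_pos c.q_pos _))]
  congr 1
  have : c.q ^ (-(0:ℤ)) = 1 := by norm_num
  rw [this]
  congr 1
  rw [zpow_neg, zpow_one]

lemma toRealU : (c.μ c.U).toReal = 1 - c.q⁻¹ := by
  rw [c.measU, ENNReal.toReal_ofReal]
  have h1 : c.q⁻¹ ≤ 1 := by
    rw [inv_le_one_iff₀]
    right; exact le_of_lt c.hq
  linarith

end Ctx
end S5


/- STATEMENT 5: For a finite extension `F` of `ℚ_p` with residue field of order `q`,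
`e = ord 2`, and Weil constant `α_ψ` characterized by
`α_ψ(a) = |2aδ|^{-1/2} ∫_𝔬 ψ(t²/(4aδ²)) dt` for nonzero `a` with `ord a ≥ -ord δ`:
`∫_{𝔬^×} α_ψ(t/δ) dt = q^{-e/2}(1-q⁻¹)` and `∫_{𝔬^×} α_ψ(ϖt/δ) dt = 0`.
Here `|y| = q^{-ord y}`, so `|2aδ|^{-1/2} = q^{ord(2aδ)/2}`. -/

theorem statement_5
    (p : ℕ) [Fact p.Prime]
    (F : Type*) [Field F] [Algebra ℚ_[p] F] [FiniteDimensional ℚ_[p] F]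
    [MeasurableSpace F]
    (ord : F → ℤ)
    (hmul : ∀ x y : F, x ≠ 0 → y ≠ 0 → ord (x * y) = ord x + ord y)
    (hult : ∀ x y : F, x ≠ 0 → y ≠ 0 → x + y ≠ 0 → min (ord x) (ord y) ≤ ord (x + y))
    (hsurj : Function.Surjective ord)
    (hcomp : 0 < ord (algebraMap ℚ_[p] F p))
    (q : ℝ) (hq : 1 < q)
    (μ : Measure F)
    (hμtrans : ∀ (a : F) (s : Set F), MeasurableSet s → μ ((a + ·) ⁻¹' s) = μ s)
    (hμball : ∀ n : ℤ, μ {x : F | x = 0 ∨ n ≤ ord x} = ENNReal.ofReal (q ^ (-n)))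
    (hmeasball : ∀ n : ℤ, MeasurableSet {x : F | x = 0 ∨ n ≤ ord x})
    (hmeasunits : MeasurableSet {x : F | x ≠ 0 ∧ ord x = 0})
    (δ : F) (hδ : δ ≠ 0)
    (ψ : F → ℂ) (hψmeas : Measurable ψ)
    (hψadd : ∀ x y : F, ψ (x + y) = ψ x * ψ y)
    (hψnorm : ∀ x : F, ‖ψ x‖ = 1)
    (hψtriv : ∀ x : F, (x = 0 ∨ -(ord δ) ≤ ord x) → ψ x = 1)
    (hψnontriv : ∃ x : F, x ≠ 0 ∧ ord x = -(ord δ) - 1 ∧ ψ x ≠ 1)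
    (ϖ : F) (hϖ0 : ϖ ≠ 0) (hϖ : ord ϖ = 1)
    (e : ℕ) (he : (e : ℤ) = ord 2)
    (α : F → ℂ) (hαmeas : Measurable α)
    -- the Weil-constant integral formula, valid for nonzero `a ∈ 𝔭^{-c_ψ}`:
    (hα : ∀ a : F, a ≠ 0 → -(ord δ) ≤ ord a →
        α a = ((q ^ ((ord (2 * a * δ) : ℝ) / 2) : ℝ) : ℂ) *
          ∫ t in {y : F | y = 0 ∨ 0 ≤ ord y}, ψ (t ^ 2 / (4 * a * δ ^ 2)) ∂μ) :
    (∫ t in {x : F | x ≠ 0 ∧ ord x = 0}, α (t / δ) ∂μ =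
        ((q ^ (-(e : ℝ) / 2) : ℝ) : ℂ) * (1 - (q : ℂ)⁻¹)) ∧
    (∫ t in {x : F | x ≠ 0 ∧ ord x = 0}, α (ϖ * t / δ) ∂μ = 0) := by
  classical
  obtain ⟨x₀, hx₀0, hx₀ord, hx₀ψ⟩ := hψnontriv
  haveI : CharZero F := charZero_of_injective_algebraMap (algebraMap ℚ_[p] F).injective
  have h2 : (2:F) ≠ 0 := two_ne_zero
  have h4 : (4:F) ≠ 0 := by norm_num
  set d : ℤ := ord δ with hd
  set c : S5.Ctx F :=
    ⟨ord, q, μ, ψ, d, 2*(e:ℤ)+1, hq, hmul, hult, hμtrans, hμball, hmeasball, hψadd,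
      hψtriv, by omega⟩ with hc
  have hq0 : (0:ℝ) < q := lt_trans one_pos hq
  have hco : c.ord = ord := rfl
  have hcM : c.M = 2*(e:ℤ)+1 := rfl
  have hordinv : ∀ y : F, y ≠ 0 → ord y⁻¹ = -ord y := fun y hy => c.ord_inv hy
  have hordneg : ∀ y : F, ord (-y) = ord y := fun y => c.ord_neg y
  have hdiv : ∀ x y : F, x ≠ 0 → y ≠ 0 → ord (x / y) = ord x - ord y := by
    intro x y hx hy
    rw [div_eq_mul_inv, hmul x y⁻¹ hx (inv_ne_zero hy), hordinv y hy]
    ring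
  have horde : ord (2:F) = (e:ℤ) := he.symm
  have hord4 : ord (4:F) = 2*(e:ℤ) := by
    have : (4:F) = 2*2 := by norm_num
    rw [this, hmul 2 2 h2 h2, horde]; ring
  have hsq : ∀ t : F, t ≠ 0 → ord (t^2) = 2 * ord t := by
    intro t ht
    rw [sq, hmul t t ht ht]; ring
  have hψ0 : ψ 0 = 1 := hψtriv 0 (Or.inl rfl)
  -- membership unfolds
  have hUmem : ∀ x : F, x ∈ c.U ↔ (x ≠ 0 ∧ ord x = 0) := fun x => Iff.rfl
  have hBmem : ∀ (n : ℤ) (x : F), x ∈ c.B n ↔ (x = 0 ∨ n ≤ ord x) := fun n x => Iff.rfl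
  -- κ
  set κ : ℂ := ((c.q ^ (-c.M) : ℝ) : ℂ) with hκ
  -- the standard Finset of residues of B 0
  set R0 : Finset F := c.Rfil (· ∈ c.B 0) with hR0
  have hR0mem : ∀ r : F, r ∈ R0 ↔ r ∈ c.R ∧ r ∈ c.B 0 := fun r => c.mem_Rfil
  have hRUmem : ∀ r : F, r ∈ c.RU ↔ r ∈ c.R ∧ r ≠ 0 ∧ ord r = 0 := fun r => c.mem_RU_iff
  have hRUB0 : ∀ r ∈ c.RU, r ∈ c.B 0 := by
    intro r hr
    rw [hRUmem] at hr
    exact Or.inr (le_of_eq hr.2.2.symm)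
  have hRUdis : ∀ r ∈ c.RU, ∀ r' ∈ c.RU, r ≠ r' → c.cls r ≠ c.cls r' := by
    intro r hr r' hr' hne
    exact c.R_cls_inj ((hRUmem r).mp hr).1 ((hRUmem r').mp hr').1 hne
  have hR0dis : ∀ r ∈ R0, ∀ r' ∈ R0, r ≠ r' → c.cls r ≠ c.cls r' := by
    intro r hr r' hr' hne
    exact c.R_cls_inj ((hR0mem r).mp hr).1 ((hR0mem r').mp hr').1 hne
  have hR0self : ∀ r ∈ R0, r ∈ c.B 0 := fun r hr => ((hR0mem r).mp hr).2
  -- closure of U under shifts of positive order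
  have hUclosed : ∀ h : F, h ≠ 0 → 1 ≤ ord h →
      (∀ x ∈ c.U, x + h ∈ c.U) ∧ (∀ x ∈ c.U, x - h ∈ c.U) := by
    intro h hne hord
    have key : ∀ g : F, g ≠ 0 → 1 ≤ ord g → ∀ x ∈ c.U, x + g ∈ c.U := by
      intro g hg hgord x hx
      obtain ⟨hx0, hxord⟩ := hx
      have hxord' : ord x = 0 := hxord
      have := c.ord_add_eq hx0 (h := g) (Or.inr (by rw [hco]; omega))
      have h2' : ord (x + g) = ord x := this.2
      exact ⟨this.1, by show ord (x+g) = 0; rw [h2', hxord']⟩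
    refine ⟨key h hne hord, ?_⟩
    intro x hx
    rw [sub_eq_add_neg]
    exact key (-h) (neg_ne_zero.mpr hne) (by rw [hordneg]; exact hord) x hx
  -- inner constancy
  have hinner : ∀ w : F, w ≠ 0 → ord w ≤ 2*(e:ℤ)+1+d →
      ∀ r ∈ R0, ∀ x ∈ c.cls r, ψ (x^2/w) = ψ (r^2/w) := by
    intro w hw hword r hr x hx
    have hrB : r ∈ c.B 0 := hR0self r hr
    have hxB : x ∈ c.B 0 := c.cls_subset_B0 hrB hx
    rcases eq_or_ne (x^2 - r^2) 0 with hzero | hne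
    · have : x^2 = r^2 := by linear_combination hzero
      rw [this]
    · have hfac : x^2 - r^2 = (x - r)*(x + r) := by ring
      have hprod : (x - r)*(x + r) ≠ 0 := by rw [← hfac]; exact hne
      have hxr0 : x - r ≠ 0 := fun h => hprod (by rw [h, zero_mul])
      have hxp0 : x + r ≠ 0 := fun h => hprod (by rw [h, mul_zero])
      have hxrM : x - r ∈ c.B c.M := hx
      have hordxr : (2*(e:ℤ)+1) ≤ ord (x - r) := by
        rcases hxrM with h0 | h0
        · exact absurd h0 hxr0
        · exact h0
      have hxpB : x + r ∈ c.B 0 := c.add_mem_B hxB hrB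
      have hordxp : 0 ≤ ord (x + r) := by
        rcases hxpB with h0 | h0
        · exact absurd h0 hxp0
        · exact h0
      have hD : -d ≤ ord ((x^2 - r^2)/w) := by
        rw [hdiv _ _ hne hw, hfac, hmul _ _ hxr0 hxp0]
        omega
      have heq : x^2/w = r^2/w + (x^2 - r^2)/w := by ring
      rw [heq, hψadd, hψtriv _ (Or.inr hD), mul_one]
  -- integral over B 0 of such functions
  have hintB0 : ∀ w : F, w ≠ 0 → ord w ≤ 2*(e:ℤ)+1+d →
      ∫ t in c.B 0, ψ (t^2/w) ∂μ = ∑ r ∈ R0, ψ (r^2/w) * κ := by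
    intro w hw hword
    exact c.master hR0self hR0dis (hmeasball 0)
      (c.cover_Rfil_B (le_refl 0) (by have := c.hM; omega)) (hinner w hw hword)
  -- value of α at u/δ for units u
  have halpha : ∀ u : F, u ≠ 0 → ord u = 0 →
      α (u/δ) = ((q ^ ((e:ℝ)/2) : ℝ) : ℂ) * ∫ t in c.B 0, ψ (t^2/(4*u*δ)) ∂μ := by
    intro u hu huord
    have ha1 : (u/δ) ≠ 0 := div_ne_zero hu hδ
    have ha2 : ord (u/δ) = -d := by rw [hdiv u δ hu hδ, huord]; ring
    have hpre : ord (2*(u/δ)*δ) = (e:ℤ) := by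
      have harg : 2*(u/δ)*δ = 2*u := by field_simp
      rw [harg, hmul 2 u h2 hu, horde, huord, add_zero]
    rw [hα (u/δ) ha1 (le_of_eq ha2.symm), hpre]
    have hset : {y : F | y = 0 ∨ 0 ≤ ord y} = c.B 0 := rfl
    rw [hset]
    have hfun : ∫ t in c.B 0, ψ (t ^ 2 / (4 * (u/δ) * δ ^ 2)) ∂μ
        = ∫ t in c.B 0, ψ (t^2/(4*u*δ)) ∂μ := by
      apply setIntegral_congr_fun (hmeasball 0)
      intro t _
      show ψ (t ^ 2 / (4 * (u/δ) * δ ^ 2)) = ψ (t^2/(4*u*δ))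
      have harg : 4*(u/δ)*δ^2 = 4*u*δ := by field_simp
      rw [harg]
    rw [hfun]
    simp only [Int.cast_natCast]
  -- class constancy of t ↦ α (t/δ) on U
  have hconst1 : ∀ r ∈ c.RU, ∀ x ∈ c.cls r, α (x/δ) = α (r/δ) := by
    intro r hr x hx
    rw [hRUmem] at hr
    obtain ⟨hrR, hr0, hrord⟩ := hr
    obtain ⟨hx0, hxord'⟩ := c.mem_cls_unit hr0 hrord hx
    have hxord : ord x = 0 := hxord'
    rw [halpha x hx0 hxord, halpha r hr0 hrord]
    congr 1
    apply setIntegral_congr_fun (hmeasball 0)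
    intro t htB
    show ψ (t^2/(4*x*δ)) = ψ (t^2/(4*r*δ))
    rcases eq_or_ne t 0 with rfl | ht0
    · norm_num
    have htord : 0 ≤ ord t := by
      rcases htB with h0 | h0
      · exact absurd h0 ht0
      · exact h0
    have hxr : x - r ∈ c.B c.M := hx
    rcases eq_or_ne (x - r) 0 with hxr0 | hxr0
    · have : x = r := by linear_combination hxr0
      rw [this]
    have hordxr : (2*(e:ℤ)+1) ≤ ord (x - r) := by
      rcases hxr with h0 | h0
      · exact absurd h0 hxr0
      · exact h0
    have hrx0 : r - x ≠ 0 := by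
      intro h; apply hxr0; linear_combination -h
    have hnum : t^2*(r-x) ≠ 0 := mul_ne_zero (pow_ne_zero 2 ht0) hrx0
    have hden : 4*x*r*δ ≠ 0 := by
      apply mul_ne_zero (mul_ne_zero (mul_ne_zero h4 hx0) hr0) hδ
    have hD : -d ≤ ord (t^2*(r-x)/(4*x*r*δ)) := by
      rw [hdiv _ _ hnum hden, hmul _ _ (pow_ne_zero 2 ht0) hrx0, hsq t ht0,
        hmul _ _ (mul_ne_zero (mul_ne_zero h4 hx0) hr0) hδ,
        hmul _ _ (mul_ne_zero h4 hx0) hr0, hmul _ _ h4 hx0, hord4, hxord, hrord]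
      have : ord (r - x) = ord (x - r) := by
        have : r - x = -(x - r) := by ring
        rw [this, hordneg]
      omega
    have heq : t^2/(4*x*δ) = t^2/(4*r*δ) + t^2*(r-x)/(4*x*r*δ) := by
      field_simp
      ring
    rw [heq, hψadd, hψtriv _ (Or.inr hD), mul_one]
  -- counts
  have hcntU : ((c.RU.card : ℂ)) * κ = (((μ c.U).toReal : ℝ) : ℂ) :=
    c.count hRUB0 hRUdis hmeasunits c.cover_RU
  have hcntB : ∀ j : ℤ, 0 ≤ j → j ≤ c.M →
      (((c.Rfil (· ∈ c.B j)).card : ℂ)) * κ = (((μ (c.B j)).toReal : ℝ) : ℂ) := by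
    intro j h0 hM
    refine c.count (fun r hr => ?_) (fun r hr r' hr' hne =>
        c.R_cls_inj (c.mem_Rfil.mp hr).1 (c.mem_Rfil.mp hr').1 hne) (hmeasball j)
      (c.cover_Rfil_B h0 hM)
    exact c.B_anti h0 (c.mem_Rfil.mp hr).2
  -- toReal values
  have htBval : ∀ j : ℤ, (μ (c.B j)).toReal = q ^ (-j) := by
    intro j
    have := c.measB j
    rw [this, ENNReal.toReal_ofReal (le_of_lt (zpow_pos hq0 _))]
  have htUval : (μ c.U).toReal = 1 - q⁻¹ := c.toRealU
  -- shift vanishing on U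
  have hUvanish : ∀ cc : F, cc ≠ 0 → ord cc ≤ -d-2 → -d ≤ ord cc + c.M →
      (∑ u ∈ c.RU, ψ (cc * u)) = 0 := by
    intro cc hcc0 hccord hccM
    have hccpsi : ∀ z ∈ c.B c.M, ψ (cc * z) = 1 := by
      rintro z (rfl | hz)
      · rw [mul_zero, hψ0]
      · rcases eq_or_ne z 0 with rfl | hz0
        · rw [mul_zero, hψ0]
        · have hz' : 2*(e:ℤ)+1 ≤ ord z := hz
          exact hψtriv _ (Or.inr (by rw [hmul _ _ hcc0 hz0]; omega))
    set h : F := x₀ * cc⁻¹ with hh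
    have hh0 : h ≠ 0 := mul_ne_zero hx₀0 (inv_ne_zero hcc0)
    have hhord : ord h = -d - 1 - ord cc := by
      rw [hh, hmul _ _ hx₀0 (inv_ne_zero hcc0), hordinv _ hcc0, hx₀ord]
      ring
    have hhord1 : 1 ≤ ord h := by omega
    have hcch : ψ (cc * h) ≠ 1 := by
      have : cc * h = x₀ := by
        rw [hh]; field_simp
      rw [this]; exact hx₀ψ
    exact c.sum_shift_zero (E := c.U) (fun x hx => Or.inr (le_of_eq hx.2.symm))
      (fun x hx => c.rep_mem_RU hx) (fun r hr => ⟨((hRUmem r).mp hr).2.1, ((hRUmem r).mp hr).2.2⟩)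
      (fun r hr => ((hRUmem r).mp hr).1) h ((hUclosed h hh0 hhord1).1)
      ((hUclosed h hh0 hhord1).2) hccpsi hcch
  -- shift vanishing on B 0 (for ord cc = -d-1)
  have hB0vanish : ∀ cc : F, cc ≠ 0 → ord cc = -d-1 →
      (∑ u ∈ R0, ψ (cc * u)) = 0 := by
    intro cc hcc0 hccord
    have hccpsi : ∀ z ∈ c.B c.M, ψ (cc * z) = 1 := by
      rintro z (rfl | hz)
      · rw [mul_zero, hψ0]
      · rcases eq_or_ne z 0 with rfl | hz0
        · rw [mul_zero, hψ0]
        · have hz' : 2*(e:ℤ)+1 ≤ ord z := hz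
          refine hψtriv _ (Or.inr (by rw [hmul _ _ hcc0 hz0]; omega))
    set h : F := x₀ * cc⁻¹ with hh
    have hh0 : h ≠ 0 := mul_ne_zero hx₀0 (inv_ne_zero hcc0)
    have hhord : ord h = 0 := by
      rw [hh, hmul _ _ hx₀0 (inv_ne_zero hcc0), hordinv _ hcc0, hx₀ord, hccord]
      ring
    have hhB : h ∈ c.B 0 := Or.inr (le_of_eq hhord.symm)
    have hcch : ψ (cc * h) ≠ 1 := by
      have : cc * h = x₀ := by rw [hh]; field_simp
      rw [this]; exact hx₀ψ
    refine c.sum_shift_zero (E := c.B 0) (fun x hx => hx)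
      (fun x hx => (hR0mem _).mpr ⟨c.rep_mem_R hx, (c.rep_mem hx).2.2⟩)
      (fun r hr => hR0self r hr) (fun r hr => ((hR0mem r).mp hr).1) h
      (fun x hx => c.add_mem_B hx hhB) (fun x hx => c.sub_mem_B hx hhB) hccpsi hcch
  constructor
  · -- PART 1
    have hA : ∀ u ∈ c.RU, α (u/δ) * κ
        = (((q ^ ((e:ℝ)/2) : ℝ) : ℂ) * κ * κ) * (∑ r ∈ R0, ψ (r^2/(4*u*δ))) := by
      intro u hu
      obtain ⟨huR, hu0, huord⟩ := (hRUmem u).mp hu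
      have hw0 : (4*u*δ) ≠ 0 := mul_ne_zero (mul_ne_zero h4 hu0) hδ
      have hword : ord (4*u*δ) ≤ 2*(e:ℤ)+1+d := by
        rw [hmul _ _ (mul_ne_zero h4 hu0) hδ, hmul _ _ h4 hu0, hord4, huord]
        omega
      rw [halpha u hu0 huord, hintB0 _ hw0 hword, ← Finset.sum_mul]
      ring
    have hJ1 : ∫ t in {x : F | x ≠ 0 ∧ ord x = 0}, α (t / δ) ∂μ
        = ∑ u ∈ c.RU, α (u/δ) * κ :=
      c.master hRUB0 hRUdis hmeasunits c.cover_RU hconst1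
    rw [hJ1, Finset.sum_congr rfl hA, ← Finset.mul_sum, Finset.sum_comm]
    have hbr : ∀ r ∈ R0, (∑ u ∈ c.RU, ψ (r^2/(4*u*δ)))
        = if r ∈ c.B (e:ℤ) then (c.RU.card : ℂ) else 0 := by
      intro r hr
      have hrB : r ∈ c.B 0 := hR0self r hr
      by_cases hP : r ∈ c.B (e:ℤ)
      · rw [if_pos hP]
        rw [Finset.sum_congr rfl (g := fun _ => (1:ℂ)) ?_, Finset.sum_const,
          nsmul_eq_mul, mul_one]
        intro u hu
        obtain ⟨huR, hu0, huord⟩ := (hRUmem u).mp hu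
        have hw0 : (4*u*δ) ≠ 0 := mul_ne_zero (mul_ne_zero h4 hu0) hδ
        rcases eq_or_ne r 0 with rfl | hr0
        · simp [hψ0]
        · have hre : (e:ℤ) ≤ ord r := hP.resolve_left hr0
          apply hψtriv
          right
          rw [hdiv _ _ (pow_ne_zero 2 hr0) hw0, hsq r hr0,
            hmul _ _ (mul_ne_zero h4 hu0) hδ, hmul _ _ h4 hu0, hord4, huord]
          omega
      · rw [if_neg hP]
        rw [hBmem] at hP
        push_neg at hP
        obtain ⟨hr0, hrlt⟩ := hP
        have hrord0 : 0 ≤ ord r := hrB.resolve_left hr0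
        set cc : F := r^2/(4*δ) with hcc
        have hcc0 : cc ≠ 0 := div_ne_zero (pow_ne_zero 2 hr0) (mul_ne_zero h4 hδ)
        have hccord : ord cc = 2*ord r - (2*(e:ℤ) + d) := by
          rw [hcc, hdiv _ _ (pow_ne_zero 2 hr0) (mul_ne_zero h4 hδ), hsq r hr0,
            hmul _ _ h4 hδ, hord4]
        have hccpsi : ∀ z ∈ c.B c.M, ψ (cc*z) = 1 := by
          rintro z (rfl | hz)
          · rw [mul_zero, hψ0]
          · rcases eq_or_ne z 0 with rfl | hz0
            · rw [mul_zero, hψ0]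
            · have hz' : 2*(e:ℤ)+1 ≤ ord z := hz
              exact hψtriv _ (Or.inr (by rw [hmul _ _ hcc0 hz0]; omega))
        have hstep1 : ∀ u ∈ c.RU, ψ (r^2/(4*u*δ)) = ψ (cc * u⁻¹) := by
          intro u hu
          obtain ⟨_, hu0, _⟩ := (hRUmem u).mp hu
          congr 1
          rw [hcc]
          field_simp
        rw [Finset.sum_congr rfl hstep1, c.sum_inv hccpsi]
        exact hUvanish cc hcc0 (by omega) (by rw [hcM]; omega)
    rw [Finset.sum_congr rfl hbr, ← Finset.sum_filter, Finset.sum_const, nsmul_eq_mul]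
    have hfe : R0.filter (· ∈ c.B (e:ℤ)) = c.Rfil (· ∈ c.B (e:ℤ)) := by
      ext r
      rw [Finset.mem_filter, hR0mem, c.mem_Rfil]
      constructor
      · rintro ⟨⟨h1, _⟩, h3⟩
        exact ⟨h1, h3⟩
      · rintro ⟨h1, h3⟩
        exact ⟨⟨h1, c.B_anti (Int.natCast_nonneg e) h3⟩, h3⟩
    rw [hfe]
    have hrearr : (((q ^ ((e:ℝ)/2) : ℝ) : ℂ) * κ * κ) *
        (((c.Rfil (· ∈ c.B (e:ℤ))).card : ℂ) * (c.RU.card : ℂ))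
        = ((q ^ ((e:ℝ)/2) : ℝ) : ℂ) * ((((c.Rfil (· ∈ c.B (e:ℤ))).card : ℂ)) * κ)
          * (((c.RU.card : ℂ)) * κ) := by ring
    rw [hrearr, hcntB (e:ℤ) (Int.natCast_nonneg e) (by rw [hcM]; omega), hcntU,
      htBval, htUval]
    have hr1 : (q:ℝ) ^ ((e:ℝ)/2) * q ^ (-(e:ℤ)) = q ^ (-(e:ℝ)/2) := by
      rw [← Real.rpow_intCast q (-(e:ℤ)), ← Real.rpow_add hq0]
      congr 1
      push_cast
      ring
    rw [← Complex.ofReal_mul, hr1]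
    push_cast
    ring
  · -- PART 2
    have halpha2 : ∀ u : F, u ≠ 0 → ord u = 0 →
        α (ϖ*u/δ) = ((q ^ (((e:ℝ)+1)/2) : ℝ) : ℂ) *
          ∫ t in c.B 0, ψ (t^2/(4*ϖ*u*δ)) ∂μ := by
      intro u hu huord
      have hwu : ϖ*u ≠ 0 := mul_ne_zero hϖ0 hu
      have ha1 : (ϖ*u/δ) ≠ 0 := div_ne_zero hwu hδ
      have ha2 : ord (ϖ*u/δ) = 1 - d := by
        rw [hdiv _ δ hwu hδ, hmul _ _ hϖ0 hu, hϖ, huord]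
        omega
      have hpre : ord (2*(ϖ*u/δ)*δ) = (e:ℤ)+1 := by
        have harg : 2*(ϖ*u/δ)*δ = 2*(ϖ*u) := by field_simp
        rw [harg, hmul 2 _ h2 hwu, horde, hmul _ _ hϖ0 hu, hϖ, huord]
        omega
      rw [hα (ϖ*u/δ) ha1 (by omega), hpre]
      have hset : {y : F | y = 0 ∨ 0 ≤ ord y} = c.B 0 := rfl
      rw [hset]
      have hfun : ∫ t in c.B 0, ψ (t ^ 2 / (4 * (ϖ*u/δ) * δ ^ 2)) ∂μ
          = ∫ t in c.B 0, ψ (t^2/(4*ϖ*u*δ)) ∂μ := by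
        apply setIntegral_congr_fun (hmeasball 0)
        intro t _
        show ψ (t ^ 2 / (4 * (ϖ*u/δ) * δ ^ 2)) = ψ (t^2/(4*ϖ*u*δ))
        have harg : 4*(ϖ*u/δ)*δ^2 = 4*ϖ*u*δ := by field_simp
        rw [harg]
      rw [hfun]
      norm_num
    have hconst2 : ∀ r ∈ c.RU, ∀ x ∈ c.cls r, α (ϖ*x/δ) = α (ϖ*r/δ) := by
      intro r hr x hx
      obtain ⟨hrR, hr0, hrord⟩ := (hRUmem r).mp hr
      obtain ⟨hx0, hxord'⟩ := c.mem_cls_unit hr0 hrord hx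
      have hxord : ord x = 0 := hxord'
      rw [halpha2 x hx0 hxord, halpha2 r hr0 hrord]
      congr 1
      apply setIntegral_congr_fun (hmeasball 0)
      intro t htB
      show ψ (t^2/(4*ϖ*x*δ)) = ψ (t^2/(4*ϖ*r*δ))
      rcases eq_or_ne t 0 with rfl | ht0
      · norm_num
      have htord : 0 ≤ ord t := by
        rcases htB with h0 | h0
        · exact absurd h0 ht0
        · exact h0
      have hxr : x - r ∈ c.B c.M := hx
      rcases eq_or_ne (x - r) 0 with hxr0 | hxr0
      · have : x = r := by linear_combination hxr0
        rw [this]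
      have hordxr : (2*(e:ℤ)+1) ≤ ord (x - r) := by
        rcases hxr with h0 | h0
        · exact absurd h0 hxr0
        · exact h0
      have hrx0 : r - x ≠ 0 := by
        intro h; apply hxr0; linear_combination -h
      have hnum : t^2*(r-x) ≠ 0 := mul_ne_zero (pow_ne_zero 2 ht0) hrx0
      have hden : 4*ϖ*x*r*δ ≠ 0 :=
        mul_ne_zero (mul_ne_zero (mul_ne_zero (mul_ne_zero h4 hϖ0) hx0) hr0) hδ
      have hD : -d ≤ ord (t^2*(r-x)/(4*ϖ*x*r*δ)) := by
        rw [hdiv _ _ hnum hden, hmul _ _ (pow_ne_zero 2 ht0) hrx0, hsq t ht0,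
          hmul _ _ (mul_ne_zero (mul_ne_zero (mul_ne_zero h4 hϖ0) hx0) hr0) hδ,
          hmul _ _ (mul_ne_zero (mul_ne_zero h4 hϖ0) hx0) hr0,
          hmul _ _ (mul_ne_zero h4 hϖ0) hx0, hmul _ _ h4 hϖ0, hord4, hϖ, hxord, hrord]
        have : ord (r - x) = ord (x - r) := by
          have heq : r - x = -(x - r) := by ring
          rw [heq, hordneg]
        omega
      have heq : t^2/(4*ϖ*x*δ) = t^2/(4*ϖ*r*δ) + t^2*(r-x)/(4*ϖ*x*r*δ) := by
        rw [div_add_div _ _ (mul_ne_zero (mul_ne_zero (mul_ne_zero h4 hϖ0) hr0) hδ) hden,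
          div_eq_div_iff (mul_ne_zero (mul_ne_zero (mul_ne_zero h4 hϖ0) hx0) hδ)
            (mul_ne_zero (mul_ne_zero (mul_ne_zero (mul_ne_zero h4 hϖ0) hr0) hδ) hden)]
        ring
      rw [heq, hψadd, hψtriv _ (Or.inr hD), mul_one]
    have hA : ∀ u ∈ c.RU, α (ϖ*u/δ) * κ
        = (((q ^ (((e:ℝ)+1)/2) : ℝ) : ℂ) * κ * κ) * (∑ r ∈ R0, ψ (r^2/(4*ϖ*u*δ))) := by
      intro u hu
      obtain ⟨huR, hu0, huord⟩ := (hRUmem u).mp hu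
      have hw0 : (4*ϖ*u*δ) ≠ 0 :=
        mul_ne_zero (mul_ne_zero (mul_ne_zero h4 hϖ0) hu0) hδ
      have hword : ord (4*ϖ*u*δ) ≤ 2*(e:ℤ)+1+d := by
        rw [hmul _ _ (mul_ne_zero (mul_ne_zero h4 hϖ0) hu0) hδ,
          hmul _ _ (mul_ne_zero h4 hϖ0) hu0, hmul _ _ h4 hϖ0, hord4, hϖ, huord]
        omega
      rw [halpha2 u hu0 huord, hintB0 _ hw0 hword, ← Finset.sum_mul]
      ring
    have hJ2 : ∫ t in {x : F | x ≠ 0 ∧ ord x = 0}, α (ϖ * t / δ) ∂μ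
        = ∑ u ∈ c.RU, α (ϖ*u/δ) * κ :=
      c.master hRUB0 hRUdis hmeasunits c.cover_RU hconst2
    rw [hJ2, Finset.sum_congr rfl hA, ← Finset.mul_sum, Finset.sum_comm]
    have hbr : ∀ r ∈ R0, (∑ u ∈ c.RU, ψ (r^2/(4*ϖ*u*δ)))
        = if r ∈ c.B ((e:ℤ)+1) then (c.RU.card : ℂ)
          else (if r ∈ c.B (e:ℤ) then -(((c.Rfil (· ∈ c.B 1)).card : ℂ)) else 0) := by
      intro r hr
      have hrB : r ∈ c.B 0 := hR0self r hr
      by_cases hP1 : r ∈ c.B ((e:ℤ)+1)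
      · rw [if_pos hP1]
        rw [Finset.sum_congr rfl (g := fun _ => (1:ℂ)) ?_, Finset.sum_const,
          nsmul_eq_mul, mul_one]
        intro u hu
        obtain ⟨huR, hu0, huord⟩ := (hRUmem u).mp hu
        have hw0 : (4*ϖ*u*δ) ≠ 0 :=
          mul_ne_zero (mul_ne_zero (mul_ne_zero h4 hϖ0) hu0) hδ
        rcases eq_or_ne r 0 with rfl | hr0
        · simp [hψ0]
        · have hre : (e:ℤ)+1 ≤ ord r := hP1.resolve_left hr0
          apply hψtriv
          right
          rw [hdiv _ _ (pow_ne_zero 2 hr0) hw0, hsq r hr0,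
            hmul _ _ (mul_ne_zero (mul_ne_zero h4 hϖ0) hu0) hδ,
            hmul _ _ (mul_ne_zero h4 hϖ0) hu0, hmul _ _ h4 hϖ0, hord4, hϖ, huord]
          omega
      · rw [if_neg hP1]
        rw [hBmem] at hP1
        push_neg at hP1
        obtain ⟨hr0, hrlt1⟩ := hP1
        have hrord0 : 0 ≤ ord r := hrB.resolve_left hr0
        have hwδ : (4*ϖ*δ) ≠ 0 := mul_ne_zero (mul_ne_zero h4 hϖ0) hδ
        set cc : F := r^2/(4*ϖ*δ) with hcc
        have hcc0 : cc ≠ 0 := div_ne_zero (pow_ne_zero 2 hr0) hwδ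
        have hccord : ord cc = 2*ord r - (2*(e:ℤ) + 1 + d) := by
          rw [hcc, hdiv _ _ (pow_ne_zero 2 hr0) hwδ, hsq r hr0,
            hmul _ _ (mul_ne_zero h4 hϖ0) hδ, hmul _ _ h4 hϖ0, hord4, hϖ]
        have hccpsi : ∀ z ∈ c.B c.M, ψ (cc*z) = 1 := by
          rintro z (rfl | hz)
          · rw [mul_zero, hψ0]
          · rcases eq_or_ne z 0 with rfl | hz0
            · rw [mul_zero, hψ0]
            · have hz' : 2*(e:ℤ)+1 ≤ ord z := hz
              exact hψtriv _ (Or.inr (by rw [hmul _ _ hcc0 hz0]; omega))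
        have hstep1 : ∀ u ∈ c.RU, ψ (r^2/(4*ϖ*u*δ)) = ψ (cc * u⁻¹) := by
          intro u hu
          obtain ⟨_, hu0, _⟩ := (hRUmem u).mp hu
          congr 1
          rw [hcc]
          field_simp
        rw [Finset.sum_congr rfl hstep1, c.sum_inv hccpsi]
        by_cases hP2 : r ∈ c.B (e:ℤ)
        · rw [if_pos hP2]
          have hre : (e:ℤ) ≤ ord r := hP2.resolve_left hr0
          have hrord : ord r = (e:ℤ) := by omega
          have hccm : ord cc = -d-1 := by omega
          -- split R0 sum
          have hsplit := Finset.sum_filter_add_sum_filter_not R0 (· ∈ c.B 1)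
            (fun u => ψ (cc * u))
          have hRUeq : R0.filter (fun u => ¬ (u ∈ c.B 1)) = c.RU := by
            ext u
            rw [Finset.mem_filter, hR0mem]
            constructor
            · rintro ⟨⟨h1, _⟩, h3⟩
              exact c.mem_Rfil.mpr ⟨h1, h3⟩
            · intro hu
              obtain ⟨h1, h3⟩ := c.mem_Rfil.mp hu
              exact ⟨⟨h1, c.R_subset h1⟩, h3⟩
          have hones : ∀ u ∈ R0.filter (fun u => u ∈ c.B 1), ψ (cc * u) = 1 := by
            intro u hu
            obtain ⟨-, huB1⟩ := Finset.mem_filter.mp hu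
            rcases huB1 with rfl | hu1
            · rw [mul_zero, hψ0]
            · rcases eq_or_ne u 0 with rfl | hu0
              · rw [mul_zero, hψ0]
              · have hu1' : (1:ℤ) ≤ ord u := hu1
                exact hψtriv _ (Or.inr (by rw [hmul _ _ hcc0 hu0]; omega))
          have hB1eq : R0.filter (fun u => u ∈ c.B 1) = c.Rfil (· ∈ c.B 1) := by
            ext u
            rw [Finset.mem_filter, hR0mem, c.mem_Rfil]
            constructor
            · rintro ⟨⟨h1, _⟩, h3⟩
              exact ⟨h1, h3⟩
            · rintro ⟨h1, h3⟩
              exact ⟨⟨h1, c.B_anti (by omega) h3⟩, h3⟩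
          have hzeroB0 : (∑ u ∈ R0, ψ (cc * u)) = 0 := hB0vanish cc hcc0 hccm
          rw [hRUeq, Finset.sum_congr rfl hones, Finset.sum_const, nsmul_eq_mul,
            mul_one, hzeroB0, hB1eq] at hsplit
          linear_combination hsplit
        · rw [if_neg hP2]
          rw [hBmem] at hP2
          push_neg at hP2
          obtain ⟨-, hrlt⟩ := hP2
          exact hUvanish cc hcc0 (by omega) (by rw [hcM]; omega)
    rw [Finset.sum_congr rfl hbr]
    -- split the nested ite sum
    have hsplit : (∑ r ∈ R0.filter (fun r => r ∈ c.B (e:ℤ)),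
          (if r ∈ c.B ((e:ℤ)+1) then (c.RU.card : ℂ)
            else (if r ∈ c.B (e:ℤ) then -(((c.Rfil (· ∈ c.B 1)).card : ℂ)) else 0)))
        + (∑ r ∈ R0.filter (fun r => ¬ (r ∈ c.B (e:ℤ))),
          (if r ∈ c.B ((e:ℤ)+1) then (c.RU.card : ℂ)
            else (if r ∈ c.B (e:ℤ) then -(((c.Rfil (· ∈ c.B 1)).card : ℂ)) else 0)))
        = ∑ r ∈ R0, (if r ∈ c.B ((e:ℤ)+1) then (c.RU.card : ℂ)
            else (if r ∈ c.B (e:ℤ) then -(((c.Rfil (· ∈ c.B 1)).card : ℂ)) else 0)) :=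
      Finset.sum_filter_add_sum_filter_not R0 _ _
    have hnotBe : ∀ r ∈ R0.filter (fun r => ¬ (r ∈ c.B (e:ℤ))),
        (if r ∈ c.B ((e:ℤ)+1) then (c.RU.card : ℂ)
          else (if r ∈ c.B (e:ℤ) then -(((c.Rfil (· ∈ c.B 1)).card : ℂ)) else 0)) = 0 := by
      intro r hr
      obtain ⟨-, hrn⟩ := Finset.mem_filter.mp hr
      rw [if_neg (fun h => hrn (c.B_anti (by omega) h)), if_neg hrn]
    have hinBe : ∀ r ∈ R0.filter (fun r => r ∈ c.B (e:ℤ)),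
        (if r ∈ c.B ((e:ℤ)+1) then (c.RU.card : ℂ)
          else (if r ∈ c.B (e:ℤ) then -(((c.Rfil (· ∈ c.B 1)).card : ℂ)) else 0))
        = (if r ∈ c.B ((e:ℤ)+1) then (c.RU.card : ℂ)
            else -(((c.Rfil (· ∈ c.B 1)).card : ℂ))) := by
      intro r hr
      obtain ⟨-, hrn⟩ := Finset.mem_filter.mp hr
      by_cases h1 : r ∈ c.B ((e:ℤ)+1)
      · rw [if_pos h1, if_pos h1]
      · rw [if_neg h1, if_neg h1, if_pos hrn]
    have hz1 : (∑ r ∈ R0.filter (fun r => ¬ (r ∈ c.B (e:ℤ))),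
          (if r ∈ c.B ((e:ℤ)+1) then (c.RU.card : ℂ)
            else (if r ∈ c.B (e:ℤ) then -(((c.Rfil (· ∈ c.B 1)).card : ℂ)) else 0))) = 0 :=
      Finset.sum_eq_zero hnotBe
    rw [← hsplit, hz1, add_zero, Finset.sum_congr rfl hinBe]
    -- now split again by B (e+1)
    have hsplit2 : (∑ r ∈ (R0.filter (fun r => r ∈ c.B (e:ℤ))).filter
            (fun r => r ∈ c.B ((e:ℤ)+1)),
          (if r ∈ c.B ((e:ℤ)+1) then (c.RU.card : ℂ)
            else -(((c.Rfil (· ∈ c.B 1)).card : ℂ))))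
        + (∑ r ∈ (R0.filter (fun r => r ∈ c.B (e:ℤ))).filter
            (fun r => ¬ (r ∈ c.B ((e:ℤ)+1))),
          (if r ∈ c.B ((e:ℤ)+1) then (c.RU.card : ℂ)
            else -(((c.Rfil (· ∈ c.B 1)).card : ℂ))))
        = ∑ r ∈ R0.filter (fun r => r ∈ c.B (e:ℤ)),
          (if r ∈ c.B ((e:ℤ)+1) then (c.RU.card : ℂ)
            else -(((c.Rfil (· ∈ c.B 1)).card : ℂ))) :=
      Finset.sum_filter_add_sum_filter_not _ _ _
    have ht1 : ∀ r ∈ (R0.filter (fun r => r ∈ c.B (e:ℤ))).filter (fun r => r ∈ c.B ((e:ℤ)+1)),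
        (if r ∈ c.B ((e:ℤ)+1) then (c.RU.card : ℂ)
          else -(((c.Rfil (· ∈ c.B 1)).card : ℂ))) = (c.RU.card : ℂ) := by
      intro r hr
      exact if_pos (Finset.mem_filter.mp hr).2
    have ht2 : ∀ r ∈ (R0.filter (fun r => r ∈ c.B (e:ℤ))).filter
          (fun r => ¬ (r ∈ c.B ((e:ℤ)+1))),
        (if r ∈ c.B ((e:ℤ)+1) then (c.RU.card : ℂ)
          else -(((c.Rfil (· ∈ c.B 1)).card : ℂ)))
        = -(((c.Rfil (· ∈ c.B 1)).card : ℂ)) := by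
      intro r hr
      exact if_neg (Finset.mem_filter.mp hr).2
    rw [Finset.sum_congr rfl ht1, Finset.sum_congr rfl ht2, Finset.sum_const,
      Finset.sum_const, nsmul_eq_mul, nsmul_eq_mul] at hsplit2
    rw [← hsplit2]
    -- identify filters with Rfil
    have hfeq : ∀ j : ℤ, 0 ≤ j → R0.filter (fun r => r ∈ c.B j) = c.Rfil (· ∈ c.B j) := by
      intro j hj
      ext u
      rw [Finset.mem_filter, hR0mem, c.mem_Rfil]
      constructor
      · rintro ⟨⟨h1, _⟩, h3⟩
        exact ⟨h1, h3⟩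
      · rintro ⟨h1, h3⟩
        exact ⟨⟨h1, c.B_anti hj h3⟩, h3⟩
    have hff : (R0.filter (fun r => r ∈ c.B (e:ℤ))).filter (fun r => r ∈ c.B ((e:ℤ)+1))
        = c.Rfil (· ∈ c.B ((e:ℤ)+1)) := by
      ext u
      simp only [Finset.mem_filter]
      rw [hR0mem, c.mem_Rfil]
      constructor
      · rintro ⟨⟨⟨h1, _⟩, _⟩, h3⟩
        exact ⟨h1, h3⟩
      · rintro ⟨h1, h3⟩
        exact ⟨⟨⟨h1, c.R_subset h1⟩, c.B_anti (by omega) h3⟩, h3⟩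
    -- card of the middle filter
    have hcard := Finset.card_filter_add_card_filter_not
      (s := R0.filter (fun r => r ∈ c.B (e:ℤ))) (p := (· ∈ c.B ((e:ℤ)+1)))
    rw [hff] at hcard
    rw [hff]
    set n1 : ℕ := (c.Rfil (· ∈ c.B ((e:ℤ)+1))).card with hn1
    set nE : ℕ := (c.Rfil (· ∈ c.B (e:ℤ))).card with hnE
    set m1 : ℕ := (c.Rfil (· ∈ c.B 1)).card with hm1
    have hnEeq : (R0.filter (fun r => r ∈ c.B (e:ℤ))).card = nE := by
      rw [hfeq (e:ℤ) (by omega)]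
    have hcard2 : ((R0.filter (fun r => r ∈ c.B (e:ℤ))).filter
        (fun r => ¬ (r ∈ c.B ((e:ℤ)+1)))).card = nE - n1 := by
      omega
    rw [hcard2]
    -- final numeric computation
    have hc1 := hcntB ((e:ℤ)+1) (by omega) (by rw [hcM]; omega)
    have hc2 := hcntB (e:ℤ) (by omega) (by rw [hcM]; omega)
    have hc3 := hcntB 1 (by omega) (by rw [hcM]; omega)
    have hn1le : n1 ≤ nE := by omega
    have hcast : ((nE - n1 : ℕ) : ℂ) = (nE : ℂ) - (n1 : ℂ) := by
      push_cast [hn1le]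
      ring
    rw [hcast]
    have hexpand : ((q ^ (((e:ℝ)+1)/2) : ℝ) : ℂ) * κ * κ *
        ((n1 : ℂ) * (c.RU.card : ℂ) + ((nE : ℂ) - (n1 : ℂ)) * -((m1 : ℂ)))
        = ((q ^ (((e:ℝ)+1)/2) : ℝ) : ℂ) *
          (((c.RU.card : ℂ) * κ) * ((n1 : ℂ) * κ)
            - ((m1 : ℂ) * κ) * ((nE : ℂ) * κ) + ((m1 : ℂ) * κ) * ((n1 : ℂ) * κ)) := by
      ring
    rw [hexpand, hcntU, hc1, hc2, hc3, htUval, htBval ((e:ℤ)+1), htBval (e:ℤ), htBval 1]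
    push_cast
    have hqC : (q:ℂ) ≠ 0 := by
      exact_mod_cast ne_of_gt hq0
    have h1C : (q:ℂ) ^ (-((e:ℤ)+1)) = (q:ℂ) ^ (-(e:ℤ)) * (q:ℂ)⁻¹ := by
      rw [neg_add, zpow_add₀ hqC, zpow_neg_one]
    rw [h1C]
    simp only [zpow_neg_one]
    ring
end

section
/- Let $F$ be a finite extension of $\mathbb{Q}_p$, $\psi$ an additive character of conductor $\mathfrak{d}^{-1} = (\boldsymbol\delta^{-1})$, Haar measure with $\mathrm{Vol}(\mathfrak{o}) = 1$, residue field of order $q$, and $e = \mathrm{ord}(2)$. Suppose $\lambda, \mu \in \mathfrak{p}^{-e}$ with $\lambda - \mu \notin \mathfrak{o}$, and let $z \in \mathfrak{o}^\times$. Then $\int_{\mathfrak{o}} \psi\big(-(s - \lambda + \mu)^2/(z\boldsymbol\delta)\big)\, ds = \psi\big(-(\lambda-\mu)^2/(z\boldsymbol\delta)\big) \ne 0$. -/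
open MeasureTheory

/- STATEMENT 16: for a finite extension `F` of `ℚ_p` with `e = ord 2`, additive
character `ψ` of conductor `𝔡⁻¹`, Haar measure with `μ(𝔬)=1`: if
`λ, μ ∈ 𝔭^{-e}` with `λ - μ ∉ 𝔬` and `z ∈ 𝔬^×`, then
`∫_𝔬 ψ(-(s-λ+μ)²/(zδ)) ds = ψ(-(λ-μ)²/(zδ)) ≠ 0`. -/

theorem statement_16
    (p : ℕ) [Fact p.Prime]
    (F : Type*) [Field F] [Algebra ℚ_[p] F] [FiniteDimensional ℚ_[p] F]
    [MeasurableSpace F]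
    (ord : F → ℤ)
    (hmul : ∀ x y : F, x ≠ 0 → y ≠ 0 → ord (x * y) = ord x + ord y)
    (hult : ∀ x y : F, x ≠ 0 → y ≠ 0 → x + y ≠ 0 → min (ord x) (ord y) ≤ ord (x + y))
    (hsurj : Function.Surjective ord)
    (hcomp : 0 < ord (algebraMap ℚ_[p] F p))
    (q : ℝ) (hq : 1 < q)
    (μ : Measure F)
    (hμtrans : ∀ (a : F) (s : Set F), MeasurableSet s → μ ((a + ·) ⁻¹' s) = μ s)
    (hμball : ∀ n : ℤ, μ {x : F | x = 0 ∨ n ≤ ord x} = ENNReal.ofReal (q ^ (-n)))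
    (hmeasball : ∀ n : ℤ, MeasurableSet {x : F | x = 0 ∨ n ≤ ord x})
    (δ : F) (hδ : δ ≠ 0)
    (ψ : F → ℂ) (hψmeas : Measurable ψ)
    (hψadd : ∀ x y : F, ψ (x + y) = ψ x * ψ y)
    (hψnorm : ∀ x : F, ‖ψ x‖ = 1)
    (hψtriv : ∀ x : F, (x = 0 ∨ -(ord δ) ≤ ord x) → ψ x = 1)
    (hψnontriv : ∃ x : F, x ≠ 0 ∧ ord x = -(ord δ) - 1 ∧ ψ x ≠ 1)
    (e : ℕ) (he : (e : ℤ) = ord 2)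
    -- `λ, μ ∈ 𝔭^{-e}` with `λ - μ ∉ 𝔬`:
    (l m : F)
    (hl : l = 0 ∨ -(e : ℤ) ≤ ord l) (hm : m = 0 ∨ -(e : ℤ) ≤ ord m)
    (hlm : l - m ≠ 0 ∧ ord (l - m) < 0)
    -- `z ∈ 𝔬^×`:
    (z : F) (hz : z ≠ 0) (hz0 : ord z = 0) :
    (∫ s in {y : F | y = 0 ∨ 0 ≤ ord y},
        ψ (-(s - l + m) ^ 2 / (z * δ)) ∂μ) = ψ (-(l - m) ^ 2 / (z * δ)) ∧
    ψ (-(l - m) ^ 2 / (z * δ)) ≠ 0 := by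

  haveI : CharZero F := charZero_of_injective_algebraMap (algebraMap ℚ_[p] F).injective
  have h2 : (2 : F) ≠ 0 := two_ne_zero
  have hone : ord 1 = 0 := by
    have := hmul 1 1 one_ne_zero one_ne_zero; simp at this; linarith
  have hnegone : ord (-1 : F) = 0 := by
    have := hmul (-1) (-1) (by norm_num) (by norm_num)
    simp [hone] at this; linarith
  have hneg : ∀ x : F, x ≠ 0 → ord (-x) = ord x := by
    intro x hx
    have : (-x : F) = (-1) * x := by ring
    rw [this, hmul _ _ (by norm_num) hx, hnegone, zero_add]
  have hinv : ∀ x : F, x ≠ 0 → ord x⁻¹ = -ord x := by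
    intro x hx
    have := hmul x x⁻¹ hx (inv_ne_zero hx)
    rw [mul_inv_cancel₀ hx, hone] at this; linarith
  -- ord (l - m) ≥ -e
  have hlmord : -(e : ℤ) ≤ ord (l - m) := by
    by_cases hl0 : l = 0
    · by_cases hm0 : m = 0
      · exact absurd (by rw [hl0, hm0, sub_zero]) hlm.1
      · have hmm : l - m = -m := by rw [hl0]; ring
        rw [hmm, hneg m hm0]
        exact hm.resolve_left hm0
    · by_cases hm0 : m = 0
      · have : l - m = l := by rw [hm0, sub_zero]
        rw [this]; exact hl.resolve_left hl0
      · have := hult l (-m) hl0 (neg_ne_zero.mpr hm0) (by rw [← sub_eq_add_neg]; exact hlm.1)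
        rw [hneg m hm0] at this
        rw [← sub_eq_add_neg] at this
        exact le_trans (le_min (hl.resolve_left hl0) (hm.resolve_left hm0)) this
  have ht0 : (2 : F) * (l - m) ≠ 0 := mul_ne_zero h2 hlm.1
  have htord : 0 ≤ ord (2 * (l - m)) := by
    rw [hmul _ _ h2 hlm.1, ← he]; omega
  have hzδ : z * δ ≠ 0 := mul_ne_zero hz hδ
  have hzδord : ord (z * δ)⁻¹ = -ord δ := by
    rw [hinv _ hzδ, hmul _ _ hz hδ, hz0, zero_add]
  -- pointwise constancy
  have hpt : Set.EqOn (fun s => ψ (-(s - l + m) ^ 2 / (z * δ)))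
      (fun _ => ψ (-(l - m) ^ 2 / (z * δ))) {y : F | y = 0 ∨ 0 ≤ ord y} := by
    intro s hs
    simp only [Set.mem_setOf_eq] at hs
    have key : -(s - l + m) ^ 2 / (z * δ)
        = s * (2 * (l - m) - s) * (z * δ)⁻¹ + -(l - m) ^ 2 / (z * δ) := by
      field_simp; ring
    have hψ1 : ψ (s * (2 * (l - m) - s) * (z * δ)⁻¹) = 1 := by
      apply hψtriv
      by_cases hs0 : s = 0
      · left; rw [hs0]; ring
      · have hsord : 0 ≤ ord s := hs.resolve_left hs0
        by_cases hc0 : 2 * (l - m) - s = 0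
        · left; rw [hc0]; ring
        · right
          have hcord : 0 ≤ ord (2 * (l - m) - s) := by
            have := hult (2 * (l - m)) (-s) ht0 (neg_ne_zero.mpr hs0)
              (by rw [← sub_eq_add_neg]; exact hc0)
            rw [hneg s hs0, ← sub_eq_add_neg] at this
            exact le_trans (le_min htord hsord) this
          rw [hmul _ _ (mul_ne_zero hs0 hc0) (inv_ne_zero hzδ),
            hmul _ _ hs0 hc0, hzδord]
          omega
    calc ψ (-(s - l + m) ^ 2 / (z * δ))
        = ψ (s * (2 * (l - m) - s) * (z * δ)⁻¹) * ψ (-(l - m) ^ 2 / (z * δ)) := by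
          rw [key, hψadd]
      _ = ψ (-(l - m) ^ 2 / (z * δ)) := by rw [hψ1, one_mul]
  have hμ1 : μ {y : F | y = 0 ∨ 0 ≤ ord y} = 1 := by
    have := hμball 0
    simpa using this
  constructor
  · rw [MeasureTheory.setIntegral_congr_fun (hmeasball 0) hpt,
      MeasureTheory.setIntegral_const, measureReal_def, hμ1]
    simp
  · intro h
    have := hψnorm (-(l - m) ^ 2 / (z * δ))
    rw [h] at this
    simp at this
end
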